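/- arXiv:math/0605218 — 3 statements merged into one kernel-verified Lean document; each statement's English description precedes it below -/
import Mathlib

section
/- For every positive integer N and every integer r ≥ 0, ⟨ω_r⟩ = Σ_{[G]} y^{e(G)} · N(N−1)⋯(N−|V(G)|+1)/(|Aut(G)| · N^{e(G)}), an identity of polynomials in the variable y, where the sum is over all isomorphism classes [G] of nimple graphs with at most N vertices that admit a trail double cover consisting of r closed trails, and e(G) denotes the number of edges of G. -/
open scoped Classical

/-- A closed walk (a cyclic sequence of directed edges, recorded as a list up to
rotation): the head of each edge is the tail of the next, cyclically. -/
def IsClosedWalk {α : Type*} (l : List (α × α)) : Prop :=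
  ∃ h : l ≠ [], List.Chain' (fun e f => e.2 = f.1) l ∧ (l.getLast h).2 = (l.head h).1

/-- A closed trail: a closed walk with no repeated directed edge. -/
def IsClosedTrail {α : Type*} (l : List (α × α)) : Prop :=
  IsClosedWalk l ∧ l.Nodup

/-- `L` is a decomposition of the set `q` of directed edges into `r` pairwise
edge-disjoint closed trails. -/
def IsTrailDecomp {α : Type*} {r : ℕ} (q : Finset (α × α)) (L : Fin r → List (α × α)) : Prop :=
  (∀ i, IsClosedTrail (L i)) ∧
  (∀ i j, i ≠ j → ∀ e, e ∈ L i → e ∉ L j) ∧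
  (∀ e, e ∈ q ↔ ∃ i, e ∈ L i)

/-- `W(r)`: the subsets of `{1,…,N}×{1,…,N}` decomposable into `r` pairwise
edge-disjoint closed trails. -/
noncomputable def trailSets (N r : ℕ) : Finset (Finset (Fin N × Fin N)) :=
  Finset.univ.filter fun q => ∃ L : Fin r → List (Fin N × Fin N), IsTrailDecomp q L

/-- The Wick weight of an unordered pair of directed edges:
`⟨M_{ij} M_{kl}⟩ = δ_{il} δ_{jk} / N`. -/
noncomputable def pairWeight (N : ℕ) : Sym2 (Fin N × Fin N) → ℚ :=
  Sym2.lift ⟨fun e f => if e.1 = f.2 ∧ e.2 = f.1 then (N : ℚ)⁻¹ else 0, by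
    intro e f
    have h : (e.1 = f.2 ∧ e.2 = f.1) ↔ (f.1 = e.2 ∧ f.2 = e.1) :=
      ⟨fun h => ⟨h.2.symm, h.1.symm⟩, fun h => ⟨h.2.symm, h.1.symm⟩⟩
    simp [h]⟩

/-- `P` is a partition of `q` into unordered pairs (of distinct elements). -/
def IsPairPartition {α : Type*} (q : Finset α) (P : Finset (Sym2 α)) : Prop :=
  (∀ p ∈ P, ¬ p.IsDiag) ∧
  (∀ p ∈ P, ∀ a ∈ p, a ∈ q) ∧
  (∀ a ∈ q, ∃! p, p ∈ P ∧ a ∈ p)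

/-- The combinatorial Gaussian bracket of the monomial `∏_{e ∈ q} M_e`:
the sum over all partitions of `q` into unordered pairs of the product of the
Wick weights of the pairs. -/
noncomputable def bracketMono (N : ℕ) (q : Finset (Fin N × Fin N)) : ℚ :=
  ∑ P ∈ Finset.univ.filter (fun P : Finset (Sym2 (Fin N × Fin N)) => IsPairPartition q P),
    ∏ p ∈ P, pairWeight N p

/-- A trail double cover of `G` consisting of `r` closed trails: every edge of `G` is
traversed exactly twice, once in each direction. -/
def IsTDC {V : Type*} {r : ℕ} (G : SimpleGraph V) (L : Fin r → List (V × V)) : Prop :=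
  (∀ i, IsClosedTrail (L i)) ∧
  (∀ i, ∀ e ∈ L i, G.Adj e.1 e.2) ∧
  (∀ x y, G.Adj x y → ∃! i, (x, y) ∈ L i)

/-- A graph is nimple if it is simple (automatic for `SimpleGraph`) and has
no vertex of degree 0. -/
def Nimple {V : Type*} (G : SimpleGraph V) : Prop :=
  ∀ v, ∃ w, G.Adj v w

def Good {N : ℕ} (q : Finset (Fin N × Fin N)) : Prop :=
  (∀ e ∈ q, e.1 ≠ e.2) ∧ (∀ e ∈ q, e.swap ∈ q)

lemma pairWeight_mk (N : ℕ) (e f : Fin N × Fin N) :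
    pairWeight N s(e, f) = if f = e.swap then (N : ℚ)⁻¹ else 0 := by
  have : (e.1 = f.2 ∧ e.2 = f.1) ↔ f = e.swap := by
    constructor
    · rintro ⟨h1, h2⟩; ext <;> simp [Prod.swap, h1.symm, h2.symm]
    · rintro rfl; simp
  simp [pairWeight, this]

lemma pairWeight_swap (N : ℕ) (e : Fin N × Fin N) :
    pairWeight N s(e, e.swap) = (N : ℚ)⁻¹ := by simp [pairWeight_mk]

/-- the canonical swap-pairing -/
noncomputable def P0 {N : ℕ} (q : Finset (Fin N × Fin N)) : Finset (Sym2 (Fin N × Fin N)) :=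
  q.image (fun e => s(e, e.swap))

lemma P0_isPairPartition {N : ℕ} {q : Finset (Fin N × Fin N)} (hq : Good q) :
    IsPairPartition q (P0 q) := by
  obtain ⟨h1, h2⟩ := hq
  refine ⟨?_, ?_, ?_⟩
  · intro p hp
    simp only [P0, Finset.mem_image] at hp
    obtain ⟨e, he, rfl⟩ := hp
    rw [Sym2.mk_isDiag_iff]
    intro h
    exact h1 e he (by simpa [Prod.ext_iff] using congrArg Prod.fst h)
  · intro p hp a ha
    simp only [P0, Finset.mem_image] at hp
    obtain ⟨e, he, rfl⟩ := hp
    rcases Sym2.mem_iff.mp ha with rfl | rfl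
    · exact he
    · exact h2 e he
  · intro a ha
    refine ⟨s(a, a.swap), ⟨Finset.mem_image_of_mem _ ha, by simp⟩, ?_⟩
    rintro p ⟨hp, hap⟩
    simp only [P0, Finset.mem_image] at hp
    obtain ⟨e, he, rfl⟩ := hp
    rcases Sym2.mem_iff.mp hap with rfl | rfl
    · rfl
    · rw [Sym2.eq_swap]; simp

lemma card_P0 {N : ℕ} {q : Finset (Fin N × Fin N)} (hq : Good q) :
    q.card = 2 * (P0 q).card := by
  have hmt : ∀ e ∈ q, s(e, e.swap) ∈ P0 q := fun e he => Finset.mem_image_of_mem _ he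
  rw [Finset.card_eq_sum_card_fiberwise hmt, Finset.sum_congr rfl, Finset.sum_const,
    smul_eq_mul, mul_comm]
  intro p hp
  simp only [P0, Finset.mem_image] at hp
  obtain ⟨e, he, rfl⟩ := hp
  have : q.filter (fun a => s(a, a.swap) = s(e, e.swap)) = {e, e.swap} := by
    ext a
    simp only [Finset.mem_filter, Finset.mem_insert, Finset.mem_singleton]
    constructor
    · rintro ⟨ha, h⟩
      replace h := (Sym2.mk_eq_mk_iff (p := (a, a.swap)) (q := (e, e.swap))).mp h
      rcases h with h | h
      · exact Or.inl (Prod.ext_iff.mp h).1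
      · exact Or.inr (Prod.ext_iff.mp h).1
    · rintro (rfl | rfl)
      · exact ⟨he, rfl⟩
      · exact ⟨hq.2 e he, by rw [Sym2.eq_swap]; simp⟩
  rw [this, Finset.card_insert_of_notMem, Finset.card_singleton]
  simp only [Finset.mem_singleton]
  intro h
  exact hq.1 e he (by simpa [Prod.ext_iff] using congrArg Prod.fst h)

lemma mem_pair_of_partition {α : Type*} {q : Finset α} {P : Finset (Sym2 α)}
    (hP : IsPairPartition q P) {a : α} (ha : a ∈ q) :
    ∃ p ∈ P, ∃ b, p = s(a, b) ∧ b ≠ a ∧ b ∈ q := by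
  obtain ⟨p, ⟨hpP, hap⟩, _⟩ := hP.2.2 a ha
  obtain ⟨b, rfl⟩ := Sym2.mem_iff_exists.mp hap
  refine ⟨s(a, b), hpP, b, rfl, ?_, hP.2.1 _ hpP b (by simp)⟩
  intro h; exact hP.1 _ hpP (Sym2.mk_isDiag_iff.mpr h.symm)

lemma bracketMono_eq (N : ℕ) (q : Finset (Fin N × Fin N)) :
    bracketMono N q = if Good q then ((N : ℚ)⁻¹) ^ (q.card / 2) else 0 := by
  by_cases hq : Good q
  · rw [if_pos hq, bracketMono]
    rw [Finset.sum_eq_single_of_mem (P0 q)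
      (Finset.mem_filter.mpr ⟨Finset.mem_univ _, P0_isPairPartition hq⟩)]
    · rw [Finset.prod_eq_pow_card, card_P0 hq, Nat.mul_div_cancel_left _ (by norm_num)]
      intro p hp
      simp only [P0, Finset.mem_image] at hp
      obtain ⟨e, _, rfl⟩ := hp
      exact pairWeight_swap N e
    · intro P hP hPne
      have hPP : IsPairPartition q P := (Finset.mem_filter.mp hP).2
      by_contra hprod
      apply hPne
      have hall : ∀ p ∈ P, pairWeight N p ≠ 0 := Finset.prod_ne_zero_iff.mp hprod
      have hsub : ∀ p ∈ P, ∃ e ∈ q, p = s(e, e.swap) := by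
        intro p hp
        induction p using Sym2.ind with
        | _ e f =>
          have hw := hall _ hp
          rw [pairWeight_mk] at hw
          have hf : f = e.swap := by by_contra h; simp [h] at hw
          exact ⟨e, hPP.2.1 _ hp e (by simp), by rw [hf]⟩
      apply Finset.Subset.antisymm
      · intro p hp
        obtain ⟨e, he, rfl⟩ := hsub p hp
        exact Finset.mem_image_of_mem _ he
      · intro p hp
        simp only [P0, Finset.mem_image] at hp
        obtain ⟨e, he, rfl⟩ := hp
        obtain ⟨p', ⟨hp'P, hep'⟩, huniq⟩ := hPP.2.2 e he
        obtain ⟨e', he', rfl⟩ := hsub p' hp'P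
        rcases Sym2.mem_iff.mp hep' with rfl | rfl
        · exact hp'P
        · rw [Prod.swap_swap, Sym2.eq_swap]; exact hp'P
  · rw [if_neg hq, bracketMono]
    apply Finset.sum_eq_zero
    intro P hP
    have hPP : IsPairPartition q P := (Finset.mem_filter.mp hP).2
    by_cases hlf : ∀ e ∈ q, e.1 ≠ e.2
    · have hsw : ∃ e ∈ q, e.swap ∉ q := by
        by_contra h; push_neg at h; exact hq ⟨hlf, h⟩
      obtain ⟨e, he, hloop⟩ := hsw
      obtain ⟨p, hpP, b, rfl, hbe, hbq⟩ := mem_pair_of_partition hPP he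
      refine Finset.prod_eq_zero hpP ?_
      rw [pairWeight_mk, if_neg]
      rintro rfl
      exact hloop hbq
    · push_neg at hlf
      obtain ⟨e, he, hloop⟩ := hlf
      obtain ⟨p, hpP, b, rfl, hbe, hbq⟩ := mem_pair_of_partition hPP he
      refine Finset.prod_eq_zero hpP ?_
      rw [pairWeight_mk, if_neg]
      intro h
      apply hbe
      rw [h]; ext <;> simp [hloop]

/-- image of the directed edge set of `G` under `f` -/
noncomputable def qOf {N n : ℕ} (G : SimpleGraph (Fin n)) (f : Fin n ↪ Fin N) :
    Finset (Fin N × Fin N) :=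
  Finset.univ.filter (fun e => ∃ a b, G.Adj a b ∧ e = (f a, f b))

lemma mem_qOf {N n : ℕ} {G : SimpleGraph (Fin n)} {f : Fin n ↪ Fin N}
    {e : Fin N × Fin N} : e ∈ qOf G f ↔ ∃ a b, G.Adj a b ∧ e = (f a, f b) := by
  simp [qOf]

lemma apply_mem_qOf {N n : ℕ} {G : SimpleGraph (Fin n)} {f : Fin n ↪ Fin N}
    {a b : Fin n} : (f a, f b) ∈ qOf G f ↔ G.Adj a b := by
  rw [mem_qOf]
  constructor
  · rintro ⟨a', b', h, he⟩
    obtain ⟨h1, h2⟩ := Prod.ext_iff.mp he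
    rwa [f.injective h1, f.injective h2]
  · exact fun h => ⟨a, b, h, rfl⟩

lemma good_qOf {N n : ℕ} (G : SimpleGraph (Fin n)) (f : Fin n ↪ Fin N) :
    Good (qOf G f) := by
  constructor
  · rintro e he h
    obtain ⟨a, b, hab, rfl⟩ := mem_qOf.mp he
    exact G.ne_of_adj hab (f.injective h)
  · rintro e he
    obtain ⟨a, b, hab, rfl⟩ := mem_qOf.mp he
    exact mem_qOf.mpr ⟨b, a, hab.symm, rfl⟩

def supp {N : ℕ} (q : Finset (Fin N × Fin N)) : Finset (Fin N) :=
  q.image Prod.fst ∪ q.image Prod.snd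

lemma mem_supp {N : ℕ} {q : Finset (Fin N × Fin N)} {v : Fin N} :
    v ∈ supp q ↔ (∃ e ∈ q, e.1 = v) ∨ (∃ e ∈ q, e.2 = v) := by
  simp [supp]

lemma supp_qOf {N n : ℕ} (G : SimpleGraph (Fin n)) (f : Fin n ↪ Fin N) :
    supp (qOf G f) = (Finset.univ.filter (fun a => ∃ b, G.Adj a b)).image f := by
  ext v
  simp only [mem_supp, Finset.mem_image, Finset.mem_filter, Finset.mem_univ, true_and]
  constructor
  · rintro (⟨e, he, rfl⟩ | ⟨e, he, rfl⟩) <;>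
      obtain ⟨a, b, hab, rfl⟩ := mem_qOf.mp he
    · exact ⟨a, ⟨b, hab⟩, rfl⟩
    · exact ⟨b, ⟨a, hab.symm⟩, rfl⟩
  · rintro ⟨a, ⟨b, hab⟩, rfl⟩
    exact Or.inl ⟨(f a, f b), mem_qOf.mpr ⟨a, b, hab, rfl⟩, rfl⟩

lemma supp_card_qOf {N n : ℕ} {G : SimpleGraph (Fin n)} {f : Fin n ↪ Fin N} :
    (supp (qOf G f)).card = n ↔ Nimple G := by
  rw [supp_qOf, Finset.card_image_of_injective _ f.injective]
  constructor
  · intro h v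
    have : (Finset.univ.filter (fun a => ∃ b, G.Adj a b)) = Finset.univ := by
      apply Finset.eq_univ_of_card
      rw [h, Fintype.card_fin]
    have := Finset.eq_univ_iff_forall.mp this v
    exact (Finset.mem_filter.mp this).2
  · intro h
    rw [Finset.filter_true_of_mem (fun a _ => h a), Finset.card_univ, Fintype.card_fin]

lemma supp_card_le {N : ℕ} (q : Finset (Fin N × Fin N)) : (supp q).card ≤ N := by
  simpa using Finset.card_le_card (Finset.subset_univ (supp q))

lemma card_qOf {N n : ℕ} (G : SimpleGraph (Fin n)) (f : Fin n ↪ Fin N) :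
    (qOf G f).card = 2 * G.edgeSet.ncard := by
  have h1 : qOf G f = (Finset.univ.filter (fun e : Fin n × Fin n => G.Adj e.1 e.2)).image
      (fun e => (f e.1, f e.2)) := by
    ext e
    simp only [mem_qOf, Finset.mem_image, Finset.mem_filter, Finset.mem_univ, true_and]
    constructor
    · rintro ⟨a, b, hab, rfl⟩; exact ⟨(a, b), hab, rfl⟩
    · rintro ⟨⟨a, b⟩, hab, rfl⟩; exact ⟨a, b, hab, rfl⟩
  have hinj : Function.Injective (fun e : Fin n × Fin n => ((f e.1, f e.2) : Fin N × Fin N)) := by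
    rintro ⟨a, b⟩ ⟨c, d⟩ h
    obtain ⟨h1, h2⟩ := Prod.ext_iff.mp h
    exact Prod.ext (f.injective h1) (f.injective h2)
  rw [h1, Finset.card_image_of_injective _ hinj]
  have h2 : Fintype.card G.Dart
      = (Finset.univ.filter (fun e : Fin n × Fin n => G.Adj e.1 e.2)).card := by
    rw [Fintype.card]
    refine Finset.card_bij (fun d _ => d.toProd) ?_ ?_ ?_
    · intro d _
      simp only [Finset.mem_filter, Finset.mem_univ, true_and]
      exact d.adj
    · intro d1 _ d2 _ h
      exact SimpleGraph.Dart.ext _ _ h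
    · intro e he
      exact ⟨SimpleGraph.Dart.mk e (Finset.mem_filter.mp he).2, Finset.mem_univ _, rfl⟩
  have h3 : G.edgeSet.ncard = G.edgeFinset.card := by
    rw [SimpleGraph.edgeFinset, Set.ncard_eq_toFinset_card']
  rw [← h2, h3, SimpleGraph.dart_card_eq_twice_card_edges]

lemma isClosedTrail_map {α β : Type*} {g : α → β} {l : List (α × α)}
    (hinj : ∀ e ∈ l, ∀ e' ∈ l, Prod.map g g e = Prod.map g g e' → e = e')
    (hl : IsClosedTrail l) : IsClosedTrail (l.map (Prod.map g g)) := by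
  obtain ⟨⟨hne, hchain, hcyc⟩, hnd⟩ := hl
  have hne' : l.map (Prod.map g g) ≠ [] := by simpa using hne
  refine ⟨⟨hne', ?_, ?_⟩, List.Nodup.map_on hinj hnd⟩
  · refine (List.isChain_map _).mpr ?_
    exact hchain.imp (fun a b h => congrArg g h)
  · rw [List.getLast_map, List.head_map]
    exact congrArg g hcyc

/-- Pushing a TDC forward along an embedding yields a trail decomposition. -/
lemma trailDecomp_of_TDC {N n r : ℕ} {G : SimpleGraph (Fin n)} (f : Fin n ↪ Fin N)
    {L : Fin r → List (Fin n × Fin n)} (hL : IsTDC G L) :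
    IsTrailDecomp (qOf G f) (fun i => (L i).map (Prod.map f f)) := by
  obtain ⟨htrail, hadj, huniq⟩ := hL
  have hinj : Function.Injective (Prod.map (f : Fin n → Fin N) f) :=
    f.injective.prodMap f.injective
  refine ⟨fun i => isClosedTrail_map (fun e _ e' _ h => hinj h) (htrail i), ?_, ?_⟩
  · intro i j hij e hei hej
    simp only [List.mem_map] at hei hej
    obtain ⟨e1, he1, rfl⟩ := hei
    obtain ⟨e2, he2, he⟩ := hej
    have he12 : e2 = e1 := hinj he
    subst he12
    obtain ⟨i0, hi0, hu⟩ := huniq e2.1 e2.2 (hadj i e2 he1)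
    exact hij ((hu i he1).trans (hu j he2).symm)
  · intro e
    rw [mem_qOf]
    constructor
    · rintro ⟨a, b, hab, rfl⟩
      obtain ⟨i, hi, -⟩ := huniq a b hab
      exact ⟨i, List.mem_map.mpr ⟨(a, b), hi, rfl⟩⟩
    · rintro ⟨i, hi⟩
      obtain ⟨e', he', rfl⟩ := List.mem_map.mp hi
      exact ⟨e'.1, e'.2, hadj i e' he', rfl⟩

/-- Pulling a trail decomposition back along an embedding yields a TDC. -/
lemma TDC_of_trailDecomp {N n r : ℕ} {G : SimpleGraph (Fin n)} (f : Fin n ↪ Fin N)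
    {L : Fin r → List (Fin N × Fin N)} (hL : IsTrailDecomp (qOf G f) L) :
    ∃ L' : Fin r → List (Fin n × Fin n), IsTDC G L' := by
  obtain ⟨htrail, hdisj, hmem⟩ := hL
  rcases Nat.eq_zero_or_pos n with rfl | hn
  · -- n = 0 : qOf G f = ∅, so r = 0 and the empty family works
    have hq : qOf G f = ∅ := by
      rw [Finset.eq_empty_iff_forall_notMem]
      intro e he
      obtain ⟨a, -, -, -⟩ := mem_qOf.mp he
      exact a.elim0
    have hr : r = 0 := by
      by_contra h
      have i : Fin r := ⟨0, Nat.pos_of_ne_zero h⟩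
      obtain ⟨⟨hne, -, -⟩, -⟩ := htrail i
      have : (L i).head hne ∈ qOf G f := (hmem _).mpr ⟨i, List.head_mem hne⟩
      rw [hq] at this
      exact absurd this (Finset.notMem_empty _)
    subst hr
    exact ⟨fun i => i.elim0, fun i => i.elim0, fun i => i.elim0, fun x => x.elim0⟩
  · haveI : Nonempty (Fin n) := ⟨⟨0, hn⟩⟩
    set g : Fin N → Fin n := Function.invFun f with hg
    have hgf : ∀ a, g (f a) = a := fun a => Function.leftInverse_invFun f.injective a
    have hmemq : ∀ i, ∀ e ∈ L i, e ∈ qOf G f := fun i e he => (hmem e).mpr ⟨i, he⟩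
    have hginj : ∀ i, ∀ e ∈ L i, ∀ e' ∈ L i,
        Prod.map g g e = Prod.map g g e' → e = e' := by
      intro i e he e' he' h
      obtain ⟨a, b, -, rfl⟩ := mem_qOf.mp (hmemq i e he)
      obtain ⟨c, d, -, rfl⟩ := mem_qOf.mp (hmemq i e' he')
      obtain ⟨h1, h2⟩ := Prod.ext_iff.mp h
      simp only [Prod.map, hgf] at h1 h2
      rw [h1, h2]
    refine ⟨fun i => (L i).map (Prod.map g g), fun i => isClosedTrail_map (hginj i) (htrail i),
      ?_, ?_⟩
    · intro i e he
      obtain ⟨e', he', rfl⟩ := List.mem_map.mp he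
      obtain ⟨a, b, hab, rfl⟩ := mem_qOf.mp (hmemq i e' he')
      simpa [Prod.map, hgf] using hab
    · intro x y hxy
      have hq : (f x, f y) ∈ qOf G f := apply_mem_qOf.mpr hxy
      obtain ⟨i, hi⟩ := (hmem _).mp hq
      refine ⟨i, List.mem_map.mpr ⟨(f x, f y), hi, by simp [Prod.map, hgf]⟩, ?_⟩
      intro j hj
      obtain ⟨e', he', heq⟩ := List.mem_map.mp hj
      obtain ⟨a, b, -, rfl⟩ := mem_qOf.mp (hmemq j e' he')
      simp only [Prod.map, hgf, Prod.mk.injEq] at heq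
      obtain ⟨rfl, rfl⟩ := heq
      by_contra hne
      exact hdisj j i hne _ he' hi

lemma nimple_of_iso {n m : ℕ} {G : SimpleGraph (Fin n)} {G' : SimpleGraph (Fin m)}
    (φ : G ≃g G') (h : Nimple G) : Nimple G' := by
  intro v
  obtain ⟨w, hw⟩ := h (φ.symm v)
  have := φ.map_adj_iff.mpr hw
  exact ⟨φ w, by simpa using this⟩

lemma TDC_of_iso {n m r : ℕ} {G : SimpleGraph (Fin n)} {G' : SimpleGraph (Fin m)}
    (φ : G ≃g G') {L : Fin r → List (Fin n × Fin n)} (h : IsTDC G L) :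
    IsTDC G' (fun i => (L i).map (Prod.map φ φ)) := by
  obtain ⟨htrail, hadj, huniq⟩ := h
  have hinj : Function.Injective (Prod.map (φ : Fin n → Fin m) φ) :=
    (φ.toEquiv.injective).prodMap φ.toEquiv.injective
  refine ⟨fun i => isClosedTrail_map (fun e _ e' _ hh => hinj hh) (htrail i), ?_, ?_⟩
  · intro i e he
    obtain ⟨e', he', rfl⟩ := List.mem_map.mp he
    exact φ.map_adj_iff.mpr (hadj i e' he')
  · intro x y hxy
    have hxy' : G.Adj (φ.symm x) (φ.symm y) := by
      rw [← φ.map_adj_iff]; simpa using hxy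
    obtain ⟨i, hi, hu⟩ := huniq _ _ hxy'
    refine ⟨i, List.mem_map.mpr ⟨(φ.symm x, φ.symm y), hi, by simp [Prod.map]⟩, ?_⟩
    intro j hj
    obtain ⟨e', he', heq⟩ := List.mem_map.mp hj
    apply hu
    have : e' = (φ.symm x, φ.symm y) := by
      obtain ⟨h1, h2⟩ := Prod.ext_iff.mp heq
      simp only [Prod.map] at h1 h2
      have h1' : e'.1 = φ.symm x := by simpa using congrArg φ.symm h1
      have h2' : e'.2 = φ.symm y := by simpa using congrArg φ.symm h2
      exact Prod.ext h1' h2'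
    rwa [← this]

lemma qOf_comp_iso {N n : ℕ} {G G' : SimpleGraph (Fin n)} (φ : G' ≃g G)
    (f : Fin n ↪ Fin N) : qOf G' (φ.toEquiv.toEmbedding.trans f) = qOf G f := by
  ext e
  simp only [mem_qOf, Function.Embedding.trans_apply, Equiv.coe_toEmbedding]
  constructor
  · rintro ⟨a, b, hab, rfl⟩
    exact ⟨φ a, φ b, φ.map_adj_iff.mpr hab, rfl⟩
  · rintro ⟨a, b, hab, rfl⟩
    exact ⟨φ.symm a, φ.symm b, φ.map_adj_iff.mp (by simpa using hab), by simp⟩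

/-- Rigidity: two nimple labelled graphs with the same directed-edge image are isomorphic
via an iso compatible with the embeddings. -/
lemma exists_iso_of_qOf_eq {N n : ℕ} {G G' : SimpleGraph (Fin n)}
    {f f' : Fin n ↪ Fin N} (hG : Nimple G) (h : qOf G f = qOf G' f') :
    ∃ φ : G ≃g G', ∀ a, f a = f' (φ a) := by
  have hstep : ∀ a : Fin n, ∃ x, f' x = f a := by
    intro a
    obtain ⟨b, hab⟩ := hG a
    have : (f a, f b) ∈ qOf G' f' := h ▸ apply_mem_qOf.mpr hab
    obtain ⟨x, y, -, hxy⟩ := mem_qOf.mp this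
    exact ⟨x, (Prod.ext_iff.mp hxy).1.symm⟩
  choose φ0 hφ0 using hstep
  have hinj : Function.Injective φ0 := by
    intro a b hab
    apply f.injective
    rw [← hφ0, ← hφ0, hab]
  have hbij : Function.Bijective φ0 := (Finite.injective_iff_bijective).mp hinj
  have hadj : ∀ a b, G.Adj a b ↔ G'.Adj (φ0 a) (φ0 b) := by
    intro a b
    rw [← apply_mem_qOf (f := f) (G := G), h, ← hφ0, ← hφ0, apply_mem_qOf]
  exact ⟨⟨Equiv.ofBijective φ0 hbij, fun {a b} => (hadj a b).symm⟩, fun a => (hφ0 a).symm⟩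

/-- graph automorphisms of a graph on `Fin n` form a finite nonempty type -/
lemma aut_pos {n : ℕ} (G : SimpleGraph (Fin n)) : 0 < Nat.card (G ≃g G) := by
  haveI : Finite (G ≃g G) :=
    Finite.of_injective (fun φ : G ≃g G => (φ.toEquiv : Fin n ≃ Fin n))
      (fun φ ψ h => RelIso.toEquiv_injective h)
  exact Nat.card_pos_iff.mpr ⟨⟨RelIso.refl _⟩, inferInstance⟩

noncomputable def graphOf {N : ℕ} (n : ℕ) (q : Finset (Fin N × Fin N)) :
    SimpleGraph (Fin n) :=
  if h : (supp q).card = n then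
    SimpleGraph.fromRel
      (fun a b => ((supp q).orderEmbOfFin h a, (supp q).orderEmbOfFin h b) ∈ q)
  else ⊥

lemma graphOf_spec {N n : ℕ} {q : Finset (Fin N × Fin N)} (hq : Good q)
    (h : (supp q).card = n) :
    q = qOf (graphOf n q) (((supp q).orderEmbOfFin h).toEmbedding) ∧
      Nimple (graphOf n q) := by
  set e := (supp q).orderEmbOfFin h with he
  have hrange : ∀ v ∈ supp q, ∃ a, e a = v := by
    intro v hv
    have := Finset.range_orderEmbOfFin (supp q) h
    rw [Set.ext_iff] at this
    obtain ⟨a, ha⟩ := (this v).mpr hv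
    exact ⟨a, ha⟩
  have hadj : ∀ a b, (graphOf n q).Adj a b ↔ (e a, e b) ∈ q := by
    intro a b
    rw [graphOf, dif_pos h]
    simp only [SimpleGraph.fromRel_adj]
    constructor
    · rintro ⟨hne, hab | hba⟩
      · exact hab
      · exact hq.2 _ hba
    · intro hab
      refine ⟨?_, Or.inl hab⟩
      rintro rfl
      exact hq.1 _ hab rfl
  constructor
  · ext x
    rw [mem_qOf]
    constructor
    · intro hx
      have h1 : x.1 ∈ supp q := mem_supp.mpr (Or.inl ⟨x, hx, rfl⟩)
      have h2 : x.2 ∈ supp q := mem_supp.mpr (Or.inr ⟨x, hx, rfl⟩)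
      obtain ⟨a, ha⟩ := hrange _ h1
      obtain ⟨b, hb⟩ := hrange _ h2
      refine ⟨a, b, (hadj a b).mpr ?_, ?_⟩
      · rwa [ha, hb, Prod.mk.eta]
      · exact Prod.ext ha.symm hb.symm
    · rintro ⟨a, b, hab, rfl⟩
      exact (hadj a b).mp hab
  · intro a
    have hmem : e a ∈ supp q := by
      have := Finset.range_orderEmbOfFin (supp q) h
      rw [Set.ext_iff] at this
      exact (this (e a)).mp ⟨a, rfl⟩
    rcases mem_supp.mp hmem with ⟨x, hx, hx1⟩ | ⟨x, hx, hx2⟩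
    · have h2 : x.2 ∈ supp q := mem_supp.mpr (Or.inr ⟨x, hx, rfl⟩)
      obtain ⟨b, hb⟩ := hrange _ h2
      refine ⟨b, (hadj a b).mpr ?_⟩
      rw [← hx1, hb, Prod.mk.eta]; exact hx
    · have h1 : x.1 ∈ supp q := mem_supp.mpr (Or.inl ⟨x, hx, rfl⟩)
      obtain ⟨b, hb⟩ := hrange _ h1
      refine ⟨b, (hadj a b).mpr ?_⟩
      rw [← hx2, hb]
      exact hq.2 _ hx

lemma isoSetoid (n : ℕ) :
    Equivalence (fun G G' : SimpleGraph (Fin n) => Nonempty (G ≃g G')) :=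
  ⟨fun G => ⟨RelIso.refl _⟩, fun ⟨φ⟩ => ⟨φ.symm⟩, fun ⟨φ⟩ ⟨ψ⟩ => ⟨φ.trans ψ⟩⟩

lemma out_mk_iso {n : ℕ} (G : SimpleGraph (Fin n)) :
    Nonempty ((Quot.mk (fun G G' : SimpleGraph (Fin n) => Nonempty (G ≃g G')) G).out ≃g G) := by
  have h := Quot.out_eq (Quot.mk (fun G G' : SimpleGraph (Fin n) => Nonempty (G ≃g G')) G)
  rw [Quot.eq] at h
  exact (Equivalence.eqvGen_iff (isoSetoid n)).mp h

lemma card_qOf_fiber {N n : ℕ} {G : SimpleGraph (Fin n)} (hG : Nimple G)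
    (f₀ : Fin n ↪ Fin N) :
    (Finset.univ.filter (fun f : Fin n ↪ Fin N => qOf G f = qOf G f₀)).card
      = Nat.card (G ≃g G) := by
  haveI : Finite (G ≃g G) :=
    Finite.of_injective (fun φ : G ≃g G => (φ.toEquiv : Fin n ≃ Fin n))
      (fun φ ψ h => RelIso.toEquiv_injective h)
  haveI : Fintype (G ≃g G) := Fintype.ofFinite _
  rw [Nat.card_eq_fintype_card, Fintype.card]
  refine (Finset.card_bij (fun φ _ => (φ : G ≃g G).toEquiv.toEmbedding.trans f₀)
    ?_ ?_ ?_).symm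
  · intro φ _
    simp only [Finset.mem_filter, Finset.mem_univ, true_and]
    exact qOf_comp_iso φ f₀
  · intro φ _ ψ _ h
    apply RelIso.toEquiv_injective
    apply Equiv.toEmbedding_injective
    apply Function.Embedding.ext
    intro a
    have := congrFun (congrArg (fun (g : Fin n ↪ Fin N) => (g : Fin n → Fin N)) h) a
    simpa using f₀.injective (by simpa using this)
  · intro f hf
    have hq : qOf G f = qOf G f₀ := (Finset.mem_filter.mp hf).2
    obtain ⟨φ, hφ⟩ := exists_iso_of_qOf_eq hG hq
    refine ⟨φ, Finset.mem_univ _, ?_⟩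
    apply Function.Embedding.ext
    intro a
    exact (hφ a).symm

lemma count_main {N n : ℕ} {G : SimpleGraph (Fin n)} (hG : Nimple G) :
    N.descFactorial n
      = (Finset.univ.image (fun f : Fin n ↪ Fin N => qOf G f)).card * Nat.card (G ≃g G) := by
  have h0 : (Finset.univ : Finset (Fin n ↪ Fin N)).card = N.descFactorial n := by
    rw [Finset.card_univ, Fintype.card_embedding_eq, Fintype.card_fin, Fintype.card_fin]
  rw [← h0, Finset.card_eq_sum_card_fiberwise
    (fun f _ => Finset.mem_image_of_mem (fun f : Fin n ↪ Fin N => qOf G f) (Finset.mem_univ f))]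
  rw [Finset.sum_congr rfl, Finset.sum_const, smul_eq_mul]
  intro q hq
  obtain ⟨f₀, -, rfl⟩ := Finset.mem_image.mp hq
  exact card_qOf_fiber hG f₀

noncomputable def classOf {N : ℕ} (n : ℕ) (q : Finset (Fin N × Fin N)) :
    Quot (fun G G' : SimpleGraph (Fin n) => Nonempty (G ≃g G')) :=
  Quot.mk _ (graphOf n q)

lemma class_char {N n : ℕ} {q : Finset (Fin N × Fin N)} (hq : Good q)
    (h : (supp q).card = n)
    (c : Quot (fun G G' : SimpleGraph (Fin n) => Nonempty (G ≃g G'))) :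
    (∃ f : Fin n ↪ Fin N, q = qOf c.out f) ↔ classOf n q = c := by
  obtain ⟨hqeq, hnimp⟩ := graphOf_spec hq h
  constructor
  · rintro ⟨f, rfl⟩
    have hiso := exists_iso_of_qOf_eq hnimp hqeq.symm
    obtain ⟨φ, -⟩ := hiso
    have : Quot.mk (fun G G' : SimpleGraph (Fin n) => Nonempty (G ≃g G')) (graphOf n (qOf c.out f))
        = Quot.mk _ c.out := Quot.sound ⟨φ⟩
    rw [classOf, this, Quot.out_eq]
  · rintro rfl
    obtain ⟨φ⟩ := out_mk_iso (graphOf n q)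
    refine ⟨φ.toEquiv.toEmbedding.trans (((supp q).orderEmbOfFin h).toEmbedding), ?_⟩
    rw [classOf, qOf_comp_iso φ, ← hqeq]

lemma claimA {N r n : ℕ} (hN : 0 < N) (G : SimpleGraph (Fin n)) :
    (∑ q ∈ ((trailSets N r).filter Good).filter
        (fun q => (supp q).card = n ∧ ∃ f : Fin n ↪ Fin N, q = qOf G f),
      Polynomial.C ((N : ℚ)⁻¹ ^ (q.card / 2)) * Polynomial.X ^ (q.card / 2)) =
    if Nimple G ∧ ∃ L : Fin r → List (Fin n × Fin n), IsTDC G L then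
      Polynomial.C ((N.descFactorial n : ℚ) /
        ((Nat.card (G ≃g G) : ℚ) * (N : ℚ) ^ G.edgeSet.ncard)) *
        Polynomial.X ^ G.edgeSet.ncard
    else 0 := by
  set T := ((trailSets N r).filter Good).filter
      (fun q => (supp q).card = n ∧ ∃ f : Fin n ↪ Fin N, q = qOf G f) with hT
  by_cases hc : Nimple G ∧ ∃ L : Fin r → List (Fin n × Fin n), IsTDC G L
  · obtain ⟨hnimp, L, hL⟩ := hc
    rw [if_pos ⟨hnimp, L, hL⟩]
    have hTimg : T = Finset.univ.image (fun f : Fin n ↪ Fin N => qOf G f) := by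
      ext q
      simp only [hT, Finset.mem_filter, Finset.mem_image, Finset.mem_univ, true_and]
      constructor
      · rintro ⟨-, -, f, rfl⟩
        exact ⟨f, rfl⟩
      · rintro ⟨f, rfl⟩
        refine ⟨⟨?_, good_qOf G f⟩, supp_card_qOf.mpr hnimp, f, rfl⟩
        simp only [trailSets, Finset.mem_filter, Finset.mem_univ, true_and]
        exact ⟨_, trailDecomp_of_TDC f hL⟩
    have hcard : ∀ q ∈ T, q.card / 2 = G.edgeSet.ncard := by
      intro q hq
      obtain ⟨-, -, f, rfl⟩ := Finset.mem_filter.mp hq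
      rw [card_qOf, Nat.mul_div_cancel_left _ (by norm_num)]
    rw [Finset.sum_congr rfl (fun q hq => by rw [hcard q hq]), Finset.sum_const]
    have hdesc : (N.descFactorial n : ℚ) = (T.card : ℚ) * (Nat.card (G ≃g G) : ℚ) := by
      rw [hTimg]
      exact_mod_cast congrArg (Nat.cast : ℕ → ℚ) (count_main (N := N) hnimp)
    have hAut : (Nat.card (G ≃g G) : ℚ) ≠ 0 := by
      exact_mod_cast (aut_pos G).ne'
    have hNne : (N : ℚ) ≠ 0 := by exact_mod_cast hN.ne'
    have hval : (N.descFactorial n : ℚ) /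
        ((Nat.card (G ≃g G) : ℚ) * (N : ℚ) ^ G.edgeSet.ncard)
        = (T.card : ℚ) * ((N : ℚ)⁻¹) ^ G.edgeSet.ncard := by
      rw [hdesc]
      field_simp
      rw [mul_assoc, ← mul_pow, mul_one_div_cancel hNne, one_pow, mul_one]
    rw [hval, Polynomial.C_mul, nsmul_eq_mul]
    have hcc : ((T.card : Polynomial ℚ)) = Polynomial.C ((T.card : ℚ)) := by simp
    rw [hcc]
    ring
  · rw [if_neg hc]
    have hTempty : T = ∅ := by
      rw [Finset.eq_empty_iff_forall_notMem]
      rintro q hq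
      obtain ⟨hq1, hsupp, f, rfl⟩ := Finset.mem_filter.mp hq
      obtain ⟨hts, -⟩ := Finset.mem_filter.mp hq1
      obtain ⟨L, hL⟩ := (Finset.mem_filter.mp hts).2
      exact hc ⟨supp_card_qOf.mp hsupp, TDC_of_trailDecomp f hL⟩
    rw [hTempty, Finset.sum_empty]


/-- `⟨ω_r⟩ = Σ_{[G]} y^{e(G)} · N(N−1)⋯(N−|V(G)|+1)/(|Aut(G)|·N^{e(G)})`
as polynomials in `y`.  On the left, `⟨ω_r⟩ = Σ_{q ∈ W(r)} ⟨∏_{e∈q} M_e⟩ · y^{|q|/2}`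
(the bracket is applied coefficientwise).  On the right, the isomorphism classes of
nimple graphs with at most `N` vertices admitting a TDC of `r` closed trails are
enumerated as the classes, for `0 ≤ n ≤ N`, of the quotient of `SimpleGraph (Fin n)`
by isomorphism (each class contributing the value at a representative `Quot.out c`;
the summand is isomorphism-invariant); `e(G)` is the number of edges. -/
theorem bracket_omega (N : ℕ) (hN : 0 < N) (r : ℕ) :
    (∑ q ∈ trailSets N r,
        Polynomial.C (bracketMono N q) * Polynomial.X ^ (q.card / 2)) =
      ∑ n ∈ Finset.range (N + 1),
        ∑ᶠ c : Quot (fun G G' : SimpleGraph (Fin n) => Nonempty (G ≃g G')),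
          if Nimple c.out ∧ ∃ L : Fin r → List (Fin n × Fin n), IsTDC c.out L then
            Polynomial.C ((N.descFactorial n : ℚ) /
                ((Nat.card (c.out ≃g c.out) : ℚ) * (N : ℚ) ^ c.out.edgeSet.ncard)) *
              Polynomial.X ^ c.out.edgeSet.ncard
          else 0 := by
  have hLHS : (∑ q ∈ trailSets N r,
      Polynomial.C (bracketMono N q) * Polynomial.X ^ (q.card / 2))
      = ∑ q ∈ (trailSets N r).filter Good,
          Polynomial.C ((N : ℚ)⁻¹ ^ (q.card / 2)) * Polynomial.X ^ (q.card / 2) := by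
    rw [Finset.sum_filter]
    apply Finset.sum_congr rfl
    intro q hq
    rw [bracketMono_eq]
    by_cases h : Good q
    · rw [if_pos h, if_pos h]
    · rw [if_neg h, if_neg h, Polynomial.C_0, zero_mul]
  rw [hLHS,
    ← Finset.sum_fiberwise_of_maps_to (g := fun q => (supp q).card)
      (t := Finset.range (N + 1))
      (fun q _ => Finset.mem_range.mpr (Nat.lt_succ_of_le (supp_card_le q)))
      (fun q => Polynomial.C ((N : ℚ)⁻¹ ^ (q.card / 2)) * Polynomial.X ^ (q.card / 2))]
  apply Finset.sum_congr rfl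
  intro n hn
  haveI : Finite (Quot (fun G G' : SimpleGraph (Fin n) => Nonempty (G ≃g G'))) :=
    Finite.of_surjective (Quot.mk _) (fun c => ⟨c.out, Quot.out_eq c⟩)
  haveI : Fintype (Quot (fun G G' : SimpleGraph (Fin n) => Nonempty (G ≃g G'))) :=
    Fintype.ofFinite _
  rw [finsum_eq_sum_of_fintype,
    ← Finset.sum_fiberwise_of_maps_to (g := classOf n) (t := Finset.univ)
      (fun q _ => Finset.mem_univ _)
      (fun q => Polynomial.C ((N : ℚ)⁻¹ ^ (q.card / 2)) * Polynomial.X ^ (q.card / 2))]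
  apply Finset.sum_congr rfl
  intro c _
  have hset : (((trailSets N r).filter Good).filter
        (fun q => (supp q).card = n)).filter (fun q => classOf n q = c)
      = ((trailSets N r).filter Good).filter
        (fun q => (supp q).card = n ∧ ∃ f : Fin n ↪ Fin N, q = qOf c.out f) := by
    ext q
    simp only [Finset.mem_filter, and_assoc]
    constructor
    · rintro ⟨h1, h2, h3, h4⟩
      exact ⟨h1, h2, h3, (class_char h2 h3 c).mpr h4⟩
    · rintro ⟨h1, h2, h3, h4⟩
      exact ⟨h1, h2, h3, (class_char h2 h3 c).mp h4⟩
  rw [hset]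
  exact claimA hN c.out
end

section
/- Fix a positive integer N. Let q be a subset of {1,…,N}×{1,…,N} with a proper pairing P, and let K be a family of directed cycles on {1,…,N}. Then q is an even set and K is a decomposition of q into pairwise edge-disjoint directed cycles of length at least three if and only if there exist a nimple graph G with at most N vertices and a directed cycle double cover C of G such that (q,P,K) ∈ c(G,C). -/
/-- A directed cycle: a closed walk visiting pairwise distinct vertices (hence with
pairwise distinct directed edges). -/
def IsDirectedCycle {α : Type*} (l : List (α × α)) : Prop :=
  IsClosedWalk l ∧ (l.map Prod.fst).Nodup

/-- `K` is a decomposition of the edge set `q` into pairwise edge-disjoint directed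
cycles of length at least three. -/
def IsCycleDecomp {α : Type*} (q : Set (α × α)) (K : Set (List (α × α))) : Prop :=
  (∀ l ∈ K, IsDirectedCycle l ∧ 3 ≤ l.length) ∧
  (∀ l ∈ K, ∀ l' ∈ K, l ≠ l' → ∀ e, e ∈ l → e ∉ l') ∧
  (∀ e, e ∈ q ↔ ∃ l ∈ K, e ∈ l)

/-- An even set of directed edges: a union of pairwise edge-disjoint directed cycles
of length greater than two. -/
def IsEvenSet {α : Type*} (q : Set (α × α)) : Prop :=
  ∃ K, IsCycleDecomp q K

/-- `K` is a directed cycle double cover of `G`: a collection of oriented cycles of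
`G` such that every edge of `G` lies in exactly two of them, traversed in opposite
directions — equivalently, each directed orientation `(i,j)` of an edge of `G` lies
in exactly one cycle of `K` (a cycle with distinct vertices and length ≥ 3 cannot
traverse an edge twice). -/
def IsDCDC {V : Type*} (G : SimpleGraph V) (K : Set (List (V × V))) : Prop :=
  (∀ l ∈ K, IsDirectedCycle l ∧ 3 ≤ l.length ∧ ∀ e ∈ l, G.Adj e.1 e.2) ∧
  (∀ i j, G.Adj i j → ∃! l, l ∈ K ∧ (i, j) ∈ l)

/-- `q` admits a proper pairing: it is partitioned into pairs `{(i,j),(j,i)}` of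
oppositely directed edges; equivalently, `q` is closed under edge reversal and
contains no loop. -/
def HasProperPairing {N : ℕ} (q : Set (Fin N × Fin N)) : Prop :=
  (∀ i j, (i, j) ∈ q → (j, i) ∈ q) ∧ ∀ i, (i, i) ∉ q

/-- The (necessarily unique) proper pairing of `q`:
`P = {{(i,j),(j,i)} : (i,j) ∈ q}`. -/
def properPairing {N : ℕ} (q : Set (Fin N × Fin N)) : Set (Sym2 (Fin N × Fin N)) :=
  {p | ∃ i j, (i, j) ∈ q ∧ p = s((i, j), (j, i))}

/-- `c(G,C)`: the set of triples `(q, P, K)` obtained from an injective colouring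
`d : V(G) → {1,…,N}` as `q = {(d x, d y), (d y, d x) : {x,y} ∈ E(G)}`,
`P = {{(d x, d y), (d y, d x)} : {x,y} ∈ E(G)}`, and `K` the image of the oriented
cycles of `C` under `d`. -/
def cSetD (N : ℕ) {V : Type*} (G : SimpleGraph V) (C : Set (List (V × V))) :
    Set (Set (Fin N × Fin N) × Set (Sym2 (Fin N × Fin N)) × Set (List (Fin N × Fin N))) :=
  {t | ∃ d : V ↪ Fin N,
    t.1 = {e | ∃ x y, G.Adj x y ∧ e = (d x, d y)} ∧
    t.2.1 = {p | ∃ x y, G.Adj x y ∧ p = s((d x, d y), (d y, d x))} ∧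
    t.2.2 = (fun l => l.map fun e => (d e.1, d e.2)) '' C}

section Aux

variable {α β : Type*} {g : α → β}

lemma isClosedWalk_map_iff (hg : Function.Injective g) (l : List (α × α)) :
    IsClosedWalk (l.map (fun e => (g e.1, g e.2))) ↔ IsClosedWalk l := by
  unfold IsClosedWalk
  constructor
  · rintro ⟨h, hc, hlh⟩
    have hne : l ≠ [] := by simpa using h
    refine ⟨hne, ?_, ?_⟩
    · unfold List.Chain' at hc ⊢; rw [List.isChain_map] at hc
      exact hc.imp (fun a b hab => hg hab)
    · rw [List.getLast_map h, List.head_map h] at hlh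
      exact hg hlh
  · rintro ⟨h, hc, hlh⟩
    have hne : l.map (fun e => (g e.1, g e.2)) ≠ [] := by simpa using h
    refine ⟨hne, ?_, ?_⟩
    · unfold List.Chain' at hc ⊢; rw [List.isChain_map]
      exact hc.imp (fun a b hab => by simp [hab])
    · rw [List.getLast_map hne, List.head_map hne]
      simp only []
      exact congrArg g hlh

lemma isDirectedCycle_map_iff (hg : Function.Injective g) (l : List (α × α)) :
    IsDirectedCycle (l.map (fun e => (g e.1, g e.2))) ↔ IsDirectedCycle l := by
  unfold IsDirectedCycle
  rw [isClosedWalk_map_iff hg]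
  have : (l.map (fun e => (g e.1, g e.2))).map Prod.fst = (l.map Prod.fst).map g := by
    simp [List.map_map, Function.comp]
  rw [this, List.nodup_map_iff hg]

end Aux

/-- for `q` with proper pairing `P` and a family `K` of directed
cycles, `q` is an even set with decomposition `K` into pairwise edge-disjoint
directed cycles of length at least three iff there are a nimple graph `G` with at
most `N` vertices and a directed cycle double cover `C` of `G` with
`(q, P, K) ∈ c(G,C)`. -/
theorem cycle_decomposition_iff_dcdc (N : ℕ) (hN : 0 < N)
    (q : Set (Fin N × Fin N)) (hP : HasProperPairing q)
    (K : Set (List (Fin N × Fin N))) :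
    IsCycleDecomp q K ↔
      ∃ n : ℕ, n ≤ N ∧ ∃ (G : SimpleGraph (Fin n)) (C : Set (List (Fin n × Fin n))),
        Nimple G ∧ IsDCDC G C ∧
        (q, properPairing q, K) ∈ cSetD N G C := by
  classical
  constructor
  · -- forward direction
    intro hK
    set s : Finset (Fin N) := Finset.univ.filter (fun v => ∃ w, (v, w) ∈ q) with hs
    refine ⟨s.card, by simpa using s.card_le_univ, ?_⟩
    set σ := s.orderIsoOfFin rfl with hσ
    set d : Fin s.card ↪ Fin N :=
      ⟨fun a => (σ a : Fin N), fun a b h => σ.injective (Subtype.ext h)⟩ with hd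
    have hds : ∀ a, (d a) ∈ s := fun a => (σ a).2
    have hsurj : ∀ v ∈ s, ∃ a, d a = v := fun v hv => ⟨σ.symm ⟨v, hv⟩, by rw [hd]; show ((σ (σ.symm ⟨v, hv⟩)) : Fin N) = v; simp⟩
    have hmem : ∀ i j, (i, j) ∈ q → i ∈ s := by
      intro i j h
      simp only [hs, Finset.mem_filter, Finset.mem_univ, true_and]
      exact ⟨j, h⟩
    set G : SimpleGraph (Fin s.card) :=
      { Adj := fun a b => (d a, d b) ∈ q
        symm := ⟨fun a b h => hP.1 _ _ h⟩
        loopless := ⟨fun a h => hP.2 _ h⟩ } with hG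
    set F : Fin s.card × Fin s.card → Fin N × Fin N := fun e => (d e.1, d e.2) with hF
    have hFinj : Function.Injective F := by
      rintro ⟨a, b⟩ ⟨a', b'⟩ h
      simp only [hF, Prod.mk.injEq] at h
      exact Prod.ext (d.injective h.1) (d.injective h.2)
    set C : Set (List (Fin s.card × Fin s.card)) := {l | l.map F ∈ K} with hC
    have hlq : ∀ l ∈ K, ∀ e ∈ l, e ∈ q := fun l hl e he => (hK.2.2 e).mpr ⟨l, hl, he⟩
    -- lifting lists from K
    have hlift : ∀ l ∈ K, ∃ l' : List (Fin s.card × Fin s.card), l'.map F = l := by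
      intro l hl
      have h3 : 3 ≤ l.length := (hK.1 l hl).2
      have hne : l ≠ [] := by
        intro h; rw [h] at h3; simp at h3
      obtain ⟨e0, he0⟩ := List.exists_mem_of_ne_nil l hne
      have : Nonempty (Fin s.card) :=
        ⟨σ.symm ⟨e0.1, hmem _ _ (hlq l hl e0 he0)⟩⟩
      refine ⟨l.map (fun x => (Function.invFun d x.1, Function.invFun d x.2)), ?_⟩
      rw [List.map_map]
      conv_rhs => rw [← List.map_id l]
      apply List.map_congr_left
      intro x hx
      have hx1 : ∃ a, d a = x.1 := hsurj x.1 (hmem _ _ (hlq l hl x hx))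
      have hx2 : ∃ a, d a = x.2 := hsurj x.2 (hmem _ _ (hP.1 _ _ (hlq l hl x hx)))
      simp only [hF, Function.comp, id]
      exact Prod.ext (Function.invFun_eq hx1) (Function.invFun_eq hx2)
    refine ⟨G, C, ?_, ⟨?_, ?_⟩, ?_⟩
    · -- Nimple
      intro a
      have := hds a
      simp only [hs, Finset.mem_filter, Finset.mem_univ, true_and] at this
      obtain ⟨w, hw⟩ := this
      obtain ⟨b, hb⟩ := hsurj w (hmem _ _ (hP.1 _ _ hw))
      exact ⟨b, by simp only [hG]; rw [hb]; exact hw⟩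
    · -- DCDC first part
      intro l' hl'
      have hl'K : l'.map F ∈ K := hl'
      obtain ⟨hcyc, hlen⟩ := hK.1 _ hl'K
      refine ⟨(isDirectedCycle_map_iff (fun a b h => d.injective h) l').mp hcyc, ?_, ?_⟩
      · simpa using hlen
      · intro e he
        have : F e ∈ l'.map F := List.mem_map_of_mem he
        exact hlq _ hl'K _ this
    · -- DCDC second part
      intro a b hab
      have habq : (d a, d b) ∈ q := hab
      obtain ⟨l, hlK, hel⟩ := (hK.2.2 (d a, d b)).mp habq
      obtain ⟨l', hl'⟩ := hlift l hlK
      have hl'C : l' ∈ C := by rw [hC, Set.mem_setOf_eq, hl']; exact hlK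
      have hab' : (a, b) ∈ l' := by
        have : F (a, b) ∈ l'.map F := by rw [hl']; exact hel
        exact (List.mem_map_of_injective hFinj).mp this
      refine ⟨l', ⟨hl'C, hab'⟩, ?_⟩
      rintro m ⟨hmC, hmab⟩
      have hmK : m.map F ∈ K := hmC
      have : m.map F = l := by
        by_contra hne
        exact hK.2.1 _ hmK _ hlK hne _ (List.mem_map_of_mem hmab) hel
      have : m.map F = l'.map F := by rw [this, hl']
      exact List.map_injective_iff.mpr hFinj this
    · -- cSetD membership
      refine ⟨d, ?_, ?_, ?_⟩
      · -- q
        ext ⟨i, j⟩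
        simp only [Set.mem_setOf_eq]
        constructor
        · intro h
          obtain ⟨x, hx⟩ := hsurj i (hmem i j h)
          obtain ⟨y, hy⟩ := hsurj j (hmem j i (hP.1 _ _ h))
          refine ⟨x, y, ?_, by rw [hx, hy]⟩
          show (d x, d y) ∈ q
          rw [hx, hy]; exact h
        · rintro ⟨x, y, hxy, he⟩
          have : (d x, d y) ∈ q := hxy
          rw [Prod.mk.injEq] at he
          rw [he.1, he.2]; exact this
      · -- properPairing
        ext p
        simp only [properPairing, Set.mem_setOf_eq]
        constructor
        · rintro ⟨i, j, hij, rfl⟩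
          obtain ⟨x, hx⟩ := hsurj i (hmem i j hij)
          obtain ⟨y, hy⟩ := hsurj j (hmem j i (hP.1 _ _ hij))
          refine ⟨x, y, ?_, by rw [hx, hy]⟩
          show (d x, d y) ∈ q
          rw [hx, hy]; exact hij
        · rintro ⟨x, y, hxy, rfl⟩
          exact ⟨d x, d y, hxy, rfl⟩
      · -- K
        ext l
        constructor
        · intro hl
          obtain ⟨l', hl'⟩ := hlift l hl
          exact ⟨l', by rw [hC, Set.mem_setOf_eq, hl']; exact hl, hl'⟩
        · rintro ⟨l', hl'C, rfl⟩
          exact hl'C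
  · -- backward direction
    rintro ⟨n, hn, G, C, hNim, hDCDC, hc⟩
    obtain ⟨d, hq, hPset, hKeq⟩ := hc
    simp only at hq hPset hKeq
    set F : Fin n × Fin n → Fin N × Fin N := fun e => (d e.1, d e.2) with hF
    have hFinj : Function.Injective F := by
      rintro ⟨a, b⟩ ⟨a', b'⟩ h
      simp only [hF, Prod.mk.injEq] at h
      exact Prod.ext (d.injective h.1) (d.injective h.2)
    refine ⟨?_, ?_, ?_⟩
    · intro l hl
      rw [hKeq] at hl
      obtain ⟨l', hl'C, rfl⟩ := hl
      obtain ⟨hcyc, hlen, _⟩ := hDCDC.1 l' hl'C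
      exact ⟨(isDirectedCycle_map_iff (fun a b h => d.injective h) l').mpr hcyc,
        by simpa using hlen⟩
    · intro l hl m hm hne e hel hem
      rw [hKeq] at hl hm
      obtain ⟨a, haC, rfl⟩ := hl
      obtain ⟨b, hbC, rfl⟩ := hm
      obtain ⟨e1, he1a, rfl⟩ := List.mem_map.mp hel
      obtain ⟨e2, he2b, he2⟩ := List.mem_map.mp hem
      have he12 : e2 = e1 := hFinj he2
      subst he12
      have hadj : G.Adj e2.1 e2.2 := (hDCDC.1 a haC).2.2 e2 he1a
      obtain ⟨l0, _, hl0u⟩ := hDCDC.2 e2.1 e2.2 hadj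
      have ha : a = l0 := hl0u a ⟨haC, by simpa using he1a⟩
      have hb : b = l0 := hl0u b ⟨hbC, by simpa using he2b⟩
      exact hne (by rw [ha, hb])
    · intro e
      constructor
      · intro he
        rw [hq] at he
        obtain ⟨x, y, hxy, rfl⟩ := he
        obtain ⟨l0, ⟨hl0C, hxyl0⟩, _⟩ := hDCDC.2 x y hxy
        refine ⟨l0.map F, by rw [hKeq]; exact ⟨l0, hl0C, rfl⟩, ?_⟩
        have : F (x, y) ∈ l0.map F := List.mem_map_of_mem hxyl0
        exact this
      · rintro ⟨l, hlK, hel⟩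
        rw [hKeq] at hlK
        obtain ⟨l', hl'C, rfl⟩ := hlK
        obtain ⟨e1, he1, rfl⟩ := List.mem_map.mp hel
        have hadj : G.Adj e1.1 e1.2 := (hDCDC.1 l' hl'C).2.2 e1 he1
        rw [hq]
        exact ⟨e1.1, e1.2, hadj, rfl⟩
end

section
/- (Witt identity) Let k ≥ 1 and let z₁,…,z_k be commuting formal variables. For each tuple (m₁,…,m_k) of nonnegative integers, not all zero, let M(m₁,…,m_k) be the number of aperiodic necklaces over the alphabet {1,…,k} containing exactly m_i occurrences of the letter i for each i. Then, as an identity of formal power series in z₁,…,z_k, ∏_{(m₁,…,m_k)≠0} (1 − z₁^{m₁}⋯z_k^{m_k})^{M(m₁,…,m_k)} = 1 − z₁ − z₂ − ⋯ − z_k. -/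
/-- Rotation equivalence of words: `l'` is a cyclic rotation of `l`. -/
def RotEquiv {n : ℕ} (l l' : List (Fin n)) : Prop :=
  ∃ m, l' = l.rotate m

/-- A necklace over the alphabet `{1,…,n}`: a word up to cyclic rotation. -/
def Necklace (n : ℕ) : Type :=
  Quot (@RotEquiv n)

/-- The number of occurrences of a letter in a necklace. -/
def Necklace.count {n : ℕ} (a : Fin n) : Necklace n → ℕ :=
  Quot.lift (fun l => l.count a)
    (by rintro l l' ⟨m, rfl⟩; exact ((l.rotate_perm m).count_eq a).symm)

/-- The length of a necklace. -/
def Necklace.length {n : ℕ} : Necklace n → ℕ :=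
  Quot.lift List.length (by rintro l l' ⟨m, rfl⟩; exact (l.length_rotate m).symm)

/-- A necklace is aperiodic if it is fixed by no nontrivial cyclic rotation of its
positions. -/
def Necklace.Aperiodic {n : ℕ} (nk : Necklace n) : Prop :=
  ∀ l : List (Fin n), Quot.mk _ l = nk → ∀ m, 0 < m → m < l.length → l.rotate m ≠ l

/-- `M(m₁,…,m_k)`: the number of (nonempty) aperiodic necklaces over `{1,…,k}` with
exactly `m i` occurrences of the letter `i` for each `i`. -/
noncomputable def aperiodicNecklaceCount (k : ℕ) (m : Fin k →₀ ℕ) : ℕ :=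
  Set.ncard {nk : Necklace k |
    0 < Necklace.length nk ∧ Necklace.Aperiodic nk ∧ ∀ i, Necklace.count i nk = m i}



open List

section LexLemmas

variable {α : Type*} [LinearOrder α]

theorem lex_append_strip : ∀ (s t r : List α), s ++ t < s ++ r ↔ t < r := by
  intro s
  induction s with
  | nil => intro t r; rfl
  | cons a s ih =>
    intro t r
    have : List.Lex (· < ·) (a :: (s ++ t)) (a :: (s ++ r)) ↔ t < r :=
      List.lex_cons_iff.trans (ih t r)
    simpa [List.cons_append] using this

theorem lt_append_of_ne_nil (s : List α) {t : List α} (ht : t ≠ []) : s < s ++ t := by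
  have : s ++ [] < s ++ t := by
    rw [lex_append_strip]
    cases t with
    | nil => exact absurd rfl ht
    | cons b t => exact List.Lex.nil
  simpa using this

theorem lex_append_of_lt_of_not_prefix :
    ∀ {u v : List α}, u < v → ¬ u <+: v → ∀ (x y : List α), u ++ x < v ++ y := by
  intro u
  induction u with
  | nil => intro v h hp x y; exact absurd (nil_prefix) hp
  | cons a u ih =>
    intro v h hp x y
    cases v with
    | nil => exact absurd h (by exact List.not_lex_nil)
    | cons b v =>
      cases h with
      | rel hab => exact List.Lex.rel hab
      | cons h' =>
        refine List.Lex.cons ?_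
        exact ih h' (fun hpre => hp (List.cons_prefix_cons.2 ⟨rfl, hpre⟩)) x y

theorem lt_of_lt_append_of_not_prefix :
    ∀ {w s : List α} {x : List α}, w < s ++ x → ¬ s <+: w → w < s := by
  intro w
  induction w with
  | nil =>
    intro s x h hp
    cases s with
    | nil => exact absurd (nil_prefix) hp
    | cons b s => exact List.Lex.nil
  | cons a w ih =>
    intro s x h hp
    cases s with
    | nil => exact absurd (nil_prefix) hp
    | cons b s =>
      cases h with
      | rel hab => exact List.Lex.rel hab
      | cons h' =>
        refine List.Lex.cons ?_
        exact ih h' (fun hpre => hp (List.cons_prefix_cons.2 ⟨rfl, hpre⟩))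

theorem lt_of_append_lt_append_same :
    ∀ {x t : List α} (s : List α), x.length = t.length → x ++ s < t ++ s → x < t := by
  intro x
  induction x with
  | nil =>
    intro t s hl h
    cases t with
    | nil => exact absurd h (by simp)
    | cons b t => simp at hl
  | cons a x ih =>
    intro t s hl h
    cases t with
    | nil => simp at hl
    | cons b t =>
      cases h with
      | rel hab => exact List.Lex.rel hab
      | cons h' => exact List.Lex.cons (ih s (by simpa using hl) h')

end LexLemmas

section Lyndon

variable {α : Type*} [LinearOrder α]

/-- A Lyndon word: nonempty and strictly smaller than all its nontrivial rotations. -/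
def Lyndon (w : List α) : Prop :=
  w ≠ [] ∧ ∀ m, 0 < m → m < w.length → w < w.rotate m

theorem lyndon_singleton (a : α) : Lyndon [a] := by
  refine ⟨by simp, ?_⟩
  intro m hm hm'
  simp at hm'
  omega

theorem Lyndon.ne_nil {w : List α} (h : Lyndon w) : w ≠ [] := h.1

/-- A Lyndon word has no nontrivial border. -/
theorem Lyndon.not_prefix_of_suffix {w s : List α} (hw : Lyndon w)
    (hs : s <:+ w) (hne : s ≠ []) (hsw : s ≠ w) : ¬ s <+: w := by
  intro hp
  obtain ⟨x, hx⟩ := hs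
  obtain ⟨t, ht⟩ := hp
  have hxne : x ≠ [] := by
    rintro rfl; rw [List.nil_append] at hx; exact hsw hx
  have htne : t ≠ [] := by
    rintro rfl; rw [List.append_nil] at ht; exact hsw ht
  have hlen : x.length = t.length := by
    have h1 : x.length + s.length = w.length := by rw [← hx]; simp
    have h2 : s.length + t.length = w.length := by rw [← ht]; simp
    omega
  have hxlt : 0 < x.length := List.length_pos_iff.2 hxne
  have hxltw : x.length < w.length := by
    have : s.length > 0 := List.length_pos_iff.2 hne
    have h1 : x.length + s.length = w.length := by rw [← hx]; simp
    omega
  have hslt : 0 < s.length := List.length_pos_iff.2 hne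
  have hsltw : s.length < w.length := by
    have : t.length > 0 := List.length_pos_iff.2 htne
    have h2 : s.length + t.length = w.length := by rw [← ht]; simp
    omega
  -- w.rotate x.length = s ++ x
  have hr1 : w.rotate x.length = s ++ x := by
    rw [← hx, List.rotate_append_length_eq]
  have hr2 : w.rotate s.length = t ++ s := by
    rw [← ht, List.rotate_append_length_eq]
  have h1 : w < s ++ x := hr1 ▸ hw.2 x.length hxlt hxltw
  have h2 : w < t ++ s := hr2 ▸ hw.2 s.length hslt hsltw
  -- from h1 : s ++ t < s ++ x get t < x
  have htx : t < x := by
    rw [← ht] at h1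
    exact (lex_append_strip s t x).1 h1
  have hxt : x < t := by
    rw [← hx] at h2
    exact lt_of_append_lt_append_same s hlen h2
  exact absurd htx (lt_asymm hxt)

/-- A Lyndon word is strictly smaller than each of its proper nonempty suffixes. -/
theorem Lyndon.lt_suffix {w s : List α} (hw : Lyndon w)
    (hs : s <:+ w) (hne : s ≠ []) (hsw : s ≠ w) : w < s := by
  obtain ⟨x, hx⟩ := hs
  have hxne : x ≠ [] := by
    rintro rfl; rw [List.nil_append] at hx; exact hsw hx
  have hxlt : 0 < x.length := List.length_pos_iff.2 hxne
  have hxltw : x.length < w.length := by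
    have h1 : x.length + s.length = w.length := by rw [← hx]; simp
    have : s.length > 0 := List.length_pos_iff.2 hne
    omega
  have hr1 : w.rotate x.length = s ++ x := by
    rw [← hx, List.rotate_append_length_eq]
  have h1 : w < s ++ x := hr1 ▸ hw.2 x.length hxlt hxltw
  exact lt_of_lt_append_of_not_prefix h1 (hw.not_prefix_of_suffix ⟨x, hx⟩ hne hsw)

theorem Lyndon.append_lt {u v : List α} (hu : Lyndon u) (hv : Lyndon v) (huv : u < v) :
    u ++ v < v := by
  by_cases hp : u <+: v
  · obtain ⟨t, ht⟩ := hp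
    have htne : t ≠ [] := by
      rintro rfl
      rw [List.append_nil] at ht
      subst ht
      exact lt_irrefl _ huv
    have : u ++ v < u ++ t := by
      rw [lex_append_strip]
      refine hv.lt_suffix ⟨u, ht⟩ htne ?_
      intro h
      rw [h] at ht
      have hl := congrArg List.length ht
      rw [List.length_append] at hl
      have hu0 : u.length = 0 := by omega
      exact hu.ne_nil (List.eq_nil_of_length_eq_zero hu0)
    rwa [ht] at this
  · have := lex_append_of_lt_of_not_prefix huv hp v []
    simpa using this

theorem Lyndon.append {u v : List α} (hu : Lyndon u) (hv : Lyndon v) (huv : u < v) :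
    Lyndon (u ++ v) := by
  have hune := hu.ne_nil
  have hvne := hv.ne_nil
  have hul : 0 < u.length := List.length_pos_iff.2 hune
  have hvl : 0 < v.length := List.length_pos_iff.2 hvne
  refine ⟨by simp [hune], ?_⟩
  intro m hm hmlen
  rw [List.length_append] at hmlen
  rcases lt_trichotomy m u.length with hcase | hcase | hcase
  · -- rotate inside u
    have hrot : (u ++ v).rotate m = u.drop m ++ (v ++ u.take m) := by
      rw [List.rotate_eq_drop_append_take (by simp; omega)]
      rw [List.drop_append_of_le_length (le_of_lt hcase),
        List.take_append_of_le_length (le_of_lt hcase)]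
      simp [List.append_assoc]
    rw [hrot]
    have hdne : u.drop m ≠ [] := by
      intro h
      have := congrArg List.length h
      simp at this
      omega
    have hlt : u < u.drop m := by
      refine hu.lt_suffix (List.drop_suffix m u) hdne ?_
      intro h
      have := congrArg List.length h
      simp at this
      omega
    have hnp : ¬ u <+: u.drop m := by
      intro h
      have := h.length_le
      simp at this
      omega
    exact lex_append_of_lt_of_not_prefix hlt hnp v (v ++ u.take m)
  · -- rotate exactly at the boundary
    subst hcase
    rw [List.rotate_append_length_eq]
    calc u ++ v < v := hu.append_lt hv huv
    _ < v ++ u := lt_append_of_ne_nil v hune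
  · -- rotate inside v
    set j := m - u.length with hj
    have hj0 : 0 < j := by omega
    have hjv : j < v.length := by omega
    have hrot : (u ++ v).rotate m = v.drop j ++ (u ++ v.take j) := by
      have : m = u.length + j := by omega
      rw [this, ← List.rotate_rotate, List.rotate_append_length_eq,
        List.rotate_eq_drop_append_take (by simp; omega)]
      rw [List.drop_append_of_le_length (le_of_lt hjv),
        List.take_append_of_le_length (le_of_lt hjv)]
      simp [List.append_assoc]
    rw [hrot]
    have hdne : v.drop j ≠ [] := by
      intro h
      have := congrArg List.length h
      simp at this
      omega
    have hlt : v < v.drop j := by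
      refine hv.lt_suffix (List.drop_suffix j v) hdne ?_
      intro h
      have := congrArg List.length h
      simp at this
      omega
    have hnp : ¬ v <+: v.drop j := by
      intro h
      have := h.length_le
      simp at this
      omega
    calc u ++ v < v := hu.append_lt hv huv
    _ = v ++ [] := by simp
    _ < v.drop j ++ (u ++ v.take j) := lex_append_of_lt_of_not_prefix hlt hnp _ _

end Lyndon
section CFL

variable {α : Type*} [LinearOrder α]

/-- A Chen–Fox–Lyndon factorization: a nonincreasing list of Lyndon words. -/
def IsCFL (w : List α) (L : List (List α)) : Prop :=
  (∀ u ∈ L, Lyndon u) ∧ List.Chain' (· ≥ ·) L ∧ L.flatten = w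

theorem chain'_or_split {β : Type*} (R : β → β → Prop) :
    ∀ L : List β, List.Chain' R L ∨
      ∃ L₁ a b L₂, L = L₁ ++ a :: b :: L₂ ∧ ¬ R a b := by
  intro L
  induction L with
  | nil => exact Or.inl List.isChain_nil
  | cons a L ih =>
    cases L with
    | nil => exact Or.inl (List.isChain_singleton a)
    | cons b L =>
      by_cases hab : R a b
      · rcases ih with h | ⟨L₁, c, d, L₂, hL, hcd⟩
        · exact Or.inl (List.IsChain.cons_cons hab h)
        · exact Or.inr ⟨a :: L₁, c, d, L₂, by rw [hL]; rfl, hcd⟩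
      · exact Or.inr ⟨[], a, b, L, rfl, hab⟩

theorem cfl_exists_aux : ∀ n (L : List (List α)), L.length = n → (∀ u ∈ L, Lyndon u) →
    ∃ L', IsCFL L.flatten L' := by
  intro n
  induction n using Nat.strong_induction_on with
  | _ n ih =>
    intro L hlen hL
    rcases chain'_or_split (· ≥ ·) L with h | ⟨L₁, a, b, L₂, hsplit, hab⟩
    · exact ⟨L, hL, h, rfl⟩
    · have hab' : a < b := not_le.1 hab
      have ha : Lyndon a := hL a (by rw [hsplit]; simp)
      have hb : Lyndon b := hL b (by rw [hsplit]; simp)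
      set M := L₁ ++ (a ++ b) :: L₂ with hM
      have hMlen : M.length < n := by
        rw [← hlen, hsplit]
        simp [hM]
      have hMl : ∀ u ∈ M, Lyndon u := by
        intro u hu
        rw [hM] at hu
        rcases List.mem_append.1 hu with h1 | h2
        · exact hL u (by rw [hsplit]; exact List.mem_append.2 (Or.inl h1))
        · rcases List.mem_cons.1 h2 with rfl | h3
          · exact ha.append hb hab'
          · exact hL u (by rw [hsplit]; simp [h3])
      have hjoin : M.flatten = L.flatten := by
        rw [hM, hsplit]
        simp
      obtain ⟨L', hL'⟩ := ih M.length hMlen M rfl hMl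
      exact ⟨L', by rwa [hjoin] at hL'⟩

theorem cfl_exists (w : List α) : ∃ L, IsCFL w L := by
  have h : ∀ u ∈ w.map (fun a => [a]), Lyndon u := by
    intro u hu
    rcases List.mem_map.1 hu with ⟨a, _, rfl⟩
    exact lyndon_singleton a
  have hj : (w.map (fun a => [a])).flatten = w := by
    induction w with
    | nil => rfl
    | cons a w ihw => simp_all
  obtain ⟨L, hL⟩ := cfl_exists_aux _ (w.map (fun a => [a])) rfl h
  exact ⟨L, by rwa [hj] at hL⟩

theorem suffix_append_cases {s x y : List α} (h : s <:+ x ++ y) :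
    s <:+ y ∨ ∃ s₀, s₀ <:+ x ∧ s₀ ≠ [] ∧ s = s₀ ++ y := by
  obtain ⟨t, ht⟩ := h
  rcases List.append_eq_append_iff.1 ht with ⟨a', ha1, ha2⟩ | ⟨c', hc1, hc2⟩
  · rcases eq_or_ne a' [] with rfl | hne
    · left
      rw [ha2]
      simp
    · exact Or.inr ⟨a', ⟨t, ha1.symm⟩, hne, ha2⟩
  · exact Or.inl ⟨c', hc2.symm⟩

/-- The last factor of a CFL factorization is minimal among all nonempty suffixes,
and strictly smaller than all longer suffixes. -/
theorem cfl_last_min : ∀ (L₀ : List (List α)) (w u : List α), IsCFL w (L₀ ++ [u]) →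
    ∀ s, s <:+ w → s ≠ [] → u ≤ s ∧ (u.length < s.length → u < s) := by
  intro L₀
  induction L₀ with
  | nil =>
    intro w u hcfl s hs hne
    have hu : Lyndon u := hcfl.1 u (by simp)
    have hw : w = u := by
      have := hcfl.2.2
      simpa using this.symm
    subst hw
    rcases eq_or_ne s w with rfl | hne2
    · exact ⟨le_refl _, by omega⟩
    · have := hu.lt_suffix hs hne hne2
      exact ⟨le_of_lt this, fun _ => this⟩
  | cons v L₀ ih =>
    intro w u hcfl s hs hne
    have hv : Lyndon v := hcfl.1 v (by simp)
    have hu : Lyndon u := hcfl.1 u (by simp)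
    set w' := (L₀ ++ [u]).flatten with hw'
    have hw : w = v ++ w' := by
      have := hcfl.2.2
      rw [← this]
      simp [hw']
    have hcfl' : IsCFL w' (L₀ ++ [u]) := by
      refine ⟨fun x hx => hcfl.1 x (by simp [hx]), hcfl.2.1.tail, rfl⟩
    have hw'ne : w' ≠ [] := by
      intro h0
      rw [hw'] at h0
      simp at h0
      exact hu.ne_nil h0.2
    have hvu : u ≤ v := by
      have hpair := (List.isChain_iff_pairwise.1 hcfl.2.1)
      rcases List.pairwise_cons.1 hpair with ⟨hrel, _⟩
      exact hrel u (by simp)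
    rw [hw] at hs
    rcases suffix_append_cases hs with hs' | ⟨s₀, hs₀, hs₀ne, rfl⟩
    · exact ih w' u hcfl' s hs' hne
    · rcases eq_or_ne s₀ v with heq | hne2
      · -- s = v ++ w'
        have h1 : s₀ < s₀ ++ w' := lt_append_of_ne_nil s₀ hw'ne
        have h2 : u < s₀ ++ w' := lt_of_le_of_lt (heq ▸ hvu) h1
        exact ⟨le_of_lt h2, fun _ => h2⟩
      · have h1 : v < s₀ := hv.lt_suffix hs₀ hs₀ne hne2
        have h2 : s₀ < s₀ ++ w' := lt_append_of_ne_nil s₀ hw'ne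
        have h3 : u < s₀ ++ w' := lt_of_le_of_lt hvu (lt_trans h1 h2)
        exact ⟨le_of_lt h3, fun _ => h3⟩

theorem suffix_eq_of_length_eq {s t w : List α} (hs : s <:+ w) (ht : t <:+ w)
    (hlen : s.length = t.length) : s = t := by
  obtain ⟨x, hx⟩ := hs
  obtain ⟨y, hy⟩ := ht
  have hxy : x.length = y.length := by
    have h1 := congrArg List.length hx
    have h2 := congrArg List.length hy
    simp at h1 h2
    omega
  rw [← hy] at hx
  exact (List.append_inj hx hxy).2

theorem cfl_unique : ∀ n (w : List α) (L L' : List (List α)), w.length = n →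
    IsCFL w L → IsCFL w L' → L = L' := by
  intro n
  induction n using Nat.strong_induction_on with
  | _ n ih =>
    intro w L L' hlen h h'
    rcases eq_or_ne w [] with rfl | hwne
    · -- both factorizations empty
      have e1 : L = [] := by
        cases L with
        | nil => rfl
        | cons u L =>
          exfalso
          have hu : Lyndon u := h.1 u (by simp)
          have := h.2.2
          simp at this
          exact hu.ne_nil this.1
      have e2 : L' = [] := by
        cases L' with
        | nil => rfl
        | cons u L' =>
          exfalso
          have hu : Lyndon u := h'.1 u (by simp)
          have := h'.2.2
          simp at this
          exact hu.ne_nil this.1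
      rw [e1, e2]
    · have hLne : L ≠ [] := by
        rintro rfl
        exact hwne h.2.2.symm
      have hL'ne : L' ≠ [] := by
        rintro rfl
        exact hwne h'.2.2.symm
      obtain ⟨L₀, u, rfl⟩ := (List.eq_nil_or_concat L).resolve_left hLne
      obtain ⟨L₀', u', rfl⟩ := (List.eq_nil_or_concat L').resolve_left hL'ne
      simp only [List.concat_eq_append] at *
      have hsu : u <:+ w := by
        refine ⟨L₀.flatten, ?_⟩
        rw [← h.2.2]
        simp
      have hsu' : u' <:+ w := by
        refine ⟨L₀'.flatten, ?_⟩
        rw [← h'.2.2]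
        simp
      have hune : u ≠ [] := (h.1 u (by simp)).ne_nil
      have hu'ne : u' ≠ [] := (h'.1 u' (by simp)).ne_nil
      have hmin := cfl_last_min L₀ w u h
      have hmin' := cfl_last_min L₀' w u' h'
      have hlen_eq : u.length = u'.length := by
        by_contra hne
        rcases Nat.lt_or_ge u.length u'.length with hlt | hge
        · have h1 : u < u' := (hmin u' hsu' hu'ne).2 hlt
          have h2 : u' ≤ u := (hmin' u hsu hune).1
          exact absurd h1 (not_lt.2 h2)
        · have hlt : u'.length < u.length := by omega
          have h1 : u' < u := (hmin' u hsu hune).2 hlt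
          have h2 : u ≤ u' := (hmin u' hsu' hu'ne).1
          exact absurd h1 (not_lt.2 h2)
      have huu : u = u' := suffix_eq_of_length_eq hsu hsu' hlen_eq
      subst huu
      have hjoin : L₀.flatten = L₀'.flatten := by
        have e1 : L₀.flatten ++ u = w := by rw [← h.2.2]; simp
        have e2 : L₀'.flatten ++ u = w := by rw [← h'.2.2]; simp
        exact List.append_cancel_right (e1.trans e2.symm)
      have hcfl0 : IsCFL L₀.flatten L₀ := by
        refine ⟨fun x hx => h.1 x (by simp [hx]), ?_, rfl⟩
        exact (List.isChain_append.1 h.2.1).1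
      have hcfl0' : IsCFL L₀.flatten L₀' := by
        refine ⟨fun x hx => h'.1 x (by simp [hx]), ?_, hjoin.symm⟩
        exact (List.isChain_append.1 h'.2.1).1
      have hlt : L₀.flatten.length < n := by
        rw [← hlen, ← h.2.2]
        have : 0 < u.length := List.length_pos_iff.2 hune
        simp
        omega
      rw [ih L₀.flatten.length hlt L₀.flatten L₀ L₀' rfl hcfl0 hcfl0']

end CFL
section Content

variable {k : ℕ}

/-- The content (letter-frequency vector) of a word. -/
noncomputable def cont (w : List (Fin k)) : Fin k →₀ ℕ :=
  Finsupp.equivFunOnFinite.symm fun i => w.count i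

theorem cont_apply (w : List (Fin k)) (i : Fin k) : cont w i = w.count i := rfl

theorem cont_nil : cont ([] : List (Fin k)) = 0 := by
  ext i
  simp [cont_apply]

theorem cont_append (u v : List (Fin k)) : cont (u ++ v) = cont u + cont v := by
  ext i
  simp [cont_apply, List.count_append]

theorem cont_eq_zero_iff {w : List (Fin k)} : cont w = 0 ↔ w = [] := by
  constructor
  · intro h
    rcases List.eq_nil_or_concat w with rfl | ⟨L, b, rfl⟩
    · rfl
    · exfalso
      have := congrArg (fun f => f b) h
      simp [cont_apply, List.count_append] at this
  · rintro rfl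
    exact cont_nil

theorem cont_flatten (L : List (List (Fin k))) :
    cont L.flatten = (L.map cont).sum := by
  induction L with
  | nil => simp [cont_nil]
  | cons u L ih => simp [cont_append, ih]

theorem cont_rotate (w : List (Fin k)) (m : ℕ) : cont (w.rotate m) = cont w := by
  ext i
  simp [cont_apply, (w.rotate_perm m).count_eq]

/-- Total degree of an exponent vector. -/
def deg (m : Fin k →₀ ℕ) : ℕ := m.sum fun _ v => v

theorem deg_eq_sum (m : Fin k →₀ ℕ) : deg m = ∑ i, m i :=
  Finsupp.sum_fintype m (fun _ v => v) (fun _ => rfl)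

theorem deg_cont (w : List (Fin k)) : deg (cont w) = w.length := by
  rw [deg_eq_sum]
  induction w with
  | nil => simp [cont_apply]
  | cons a w ih =>
    simp only [cont_apply] at ih ⊢
    simp only [List.count_cons, List.length_cons]
    rw [Finset.sum_add_distrib, ih]
    simp [Finset.sum_ite_eq]

theorem deg_mono {a b : Fin k →₀ ℕ} (h : a ≤ b) : deg a ≤ deg b := by
  rw [deg_eq_sum, deg_eq_sum]
  exact Finset.sum_le_sum fun i _ => h i

theorem deg_eq_zero_iff {m : Fin k →₀ ℕ} : deg m = 0 ↔ m = 0 := by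
  rw [deg_eq_sum]
  constructor
  · intro h
    ext i
    have := Finset.sum_eq_zero_iff.1 h i (Finset.mem_univ i)
    simpa using this
  · rintro rfl
    simp

/-- The finset of all lists over `Fin k` of length `n`. -/
def allLists (k : ℕ) : ℕ → Finset (List (Fin k))
  | 0 => {[]}
  | n + 1 => (Finset.univ ×ˢ allLists k n).image fun p => p.1 :: p.2

theorem mem_allLists {n : ℕ} {w : List (Fin k)} : w ∈ allLists k n ↔ w.length = n := by
  induction n generalizing w with
  | zero => cases w <;> simp [allLists]
  | succ n ih =>
    cases w with
    | nil => simp [allLists]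
    | cons a w =>
      simp only [allLists, Finset.mem_image, Finset.mem_product, List.length_cons]
      constructor
      · rintro ⟨⟨b, l⟩, ⟨-, hl⟩, heq⟩
        obtain ⟨rfl, rfl⟩ : b = a ∧ l = w := by
          constructor <;> [exact (List.cons.inj heq).1; exact (List.cons.inj heq).2]
        rw [ih.1 hl]
      · intro h
        refine ⟨(a, w), ⟨Finset.mem_univ a, ih.2 ?_⟩, rfl⟩
        show w.length = n
        omega

/-- The finset of all words with content `e`. -/
noncomputable def wordFinset (e : Fin k →₀ ℕ) : Finset (List (Fin k)) :=
  (allLists k (deg e)).filter fun w => cont w = e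

theorem mem_wordFinset {e : Fin k →₀ ℕ} {w : List (Fin k)} :
    w ∈ wordFinset e ↔ cont w = e := by
  rw [wordFinset, Finset.mem_filter, mem_allLists]
  constructor
  · exact fun h => h.2
  · intro h
    exact ⟨by rw [← h, deg_cont], h⟩

theorem wordFinset_zero : wordFinset (0 : Fin k →₀ ℕ) = {[]} := by
  ext w
  rw [mem_wordFinset, cont_eq_zero_iff, Finset.mem_singleton]

end Content
section Series

variable {k : ℕ}

open MvPowerSeries

theorem cont_singleton (i : Fin k) : cont [i] = Finsupp.single i 1 := by
  ext j
  rw [cont_apply, Finsupp.single_apply]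
  rcases eq_or_ne i j with rfl | h
  · simp
  · simp [h, Ne.symm h, List.count_singleton]

/-- The generating series of all words: the coefficient of `e` counts words of
content `e`. -/
noncomputable def Wser (k : ℕ) : MvPowerSeries (Fin k) ℤ :=
  fun e => ((wordFinset e).card : ℤ)

theorem coeff_Wser (e : Fin k →₀ ℕ) :
    MvPowerSeries.coeff (R := ℤ) e (Wser k) = ((wordFinset e).card : ℤ) := rfl

theorem wordFinset_card_rec {e : Fin k →₀ ℕ} (he : e ≠ 0) :
    (wordFinset e).card = ∑ i : Fin k,
      if Finsupp.single i 1 ≤ e then (wordFinset (e - Finsupp.single i 1)).card else 0 := by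
  classical
  have key : wordFinset e =
      Finset.univ.biUnion (fun i : Fin k =>
        (wordFinset e).filter (fun w => w.getLast? = some i)) := by
    ext w
    simp only [Finset.mem_biUnion, Finset.mem_univ, true_and, Finset.mem_filter]
    constructor
    · intro hw
      rcases List.eq_nil_or_concat w with rfl | ⟨L, b, rfl⟩
      · exfalso
        have h0 := mem_wordFinset.1 hw
        rw [cont_nil] at h0
        exact he h0.symm
      · rw [List.concat_eq_append]  at hw ⊢
        exact ⟨b, hw, List.getLast?_concat (l := L)⟩
    · rintro ⟨i, hw, -⟩
      exact hw
  rw [key, Finset.card_biUnion]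
  · refine Finset.sum_congr rfl ?_
    intro i _
    by_cases hle : Finsupp.single i 1 ≤ e
    · rw [if_pos hle]
      have himg : (wordFinset e).filter (fun w => w.getLast? = some i) =
          (wordFinset (e - Finsupp.single i 1)).image (fun w => w ++ [i]) := by
        ext w
        simp only [Finset.mem_filter, Finset.mem_image, mem_wordFinset]
        constructor
        · rintro ⟨hw, hlast⟩
          rcases List.eq_nil_or_concat w with rfl | ⟨L, b, rfl⟩
          · simp at hlast
          · rw [List.concat_eq_append] at hw hlast ⊢
            rw [List.getLast?_concat] at hlast
            obtain rfl : b = i := by injection hlast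
            refine ⟨L, ?_, rfl⟩
            refine eq_tsub_of_add_eq ?_
            rw [← cont_singleton, ← cont_append, hw]
        · rintro ⟨w', hw', rfl⟩
          refine ⟨?_, List.getLast?_concat (l := w')⟩
          rw [cont_append, cont_singleton, hw', tsub_add_cancel_of_le hle]
      rw [himg, Finset.card_image_of_injective _ (List.append_left_injective [i])]
    · rw [if_neg hle]
      rw [Finset.card_eq_zero]
      ext w
      simp only [Finset.mem_filter, mem_wordFinset, Finset.notMem_empty, iff_false]
      rintro ⟨hw, hlast⟩
      apply hle
      rw [Finsupp.single_le_iff, ← hw, cont_apply]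
      rcases List.eq_nil_or_concat w with rfl | ⟨L, b, rfl⟩
      · simp at hlast
      · rw [List.concat_eq_append] at hlast ⊢
        rw [List.getLast?_concat] at hlast
        obtain rfl : b = i := by injection hlast
        rw [List.count_append]
        simp
  · intro i _ j _ hij
    simp only [Finset.disjoint_left, Finset.mem_filter]
    rintro w ⟨-, h1⟩ ⟨-, h2⟩
    rw [h1] at h2
    exact hij (by injection h2)

theorem Wser_mul_one_sub : Wser k * (1 - ∑ i : Fin k, X i) = 1 := by
  classical
  ext e
  rw [mul_sub, mul_one, map_sub, Finset.mul_sum, map_sum]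
  have hX : ∀ i : Fin k, MvPowerSeries.coeff (R := ℤ) e (Wser k * X i) =
      if Finsupp.single i 1 ≤ e then ((wordFinset (e - Finsupp.single i 1)).card : ℤ) else 0 := by
    intro i
    rw [X_def, coeff_mul_monomial]
    simp [coeff_Wser]
  simp only [hX]
  rcases eq_or_ne e 0 with rfl | hne
  · rw [coeff_one]
    simp only [if_pos rfl]
    have : ∀ i : Fin k, ¬ (Finsupp.single i 1 ≤ (0 : Fin k →₀ ℕ)) := by
      intro i h
      simpa using Finsupp.single_le_iff.1 h
    rw [coeff_Wser, wordFinset_zero]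
    simp [this]
  · rw [coeff_one, if_neg hne, coeff_Wser, wordFinset_card_rec hne]
    push_cast
    exact sub_self _

theorem coeff_mul_congr {f g h : MvPowerSeries (Fin k) ℤ} {e : Fin k →₀ ℕ}
    (H : ∀ a, a ≤ e → MvPowerSeries.coeff (R := ℤ) a f = MvPowerSeries.coeff (R := ℤ) a g) :
    MvPowerSeries.coeff (R := ℤ) e (f * h) = MvPowerSeries.coeff (R := ℤ) e (g * h) := by
  classical
  rw [coeff_mul, coeff_mul]
  refine Finset.sum_congr rfl ?_
  intro p hp
  have hpe : p.1 + p.2 = e := Finset.HasAntidiagonal.mem_antidiagonal.1 hp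
  rw [H p.1 (hpe ▸ self_le_add_right _ _)]

theorem coeff_mul_one_sub_monomial (f : MvPowerSeries (Fin k) ℤ) (m e : Fin k →₀ ℕ) :
    MvPowerSeries.coeff (R := ℤ) e (f * (1 - monomial (R := ℤ) m 1)) =
      MvPowerSeries.coeff (R := ℤ) e f -
        if m ≤ e then MvPowerSeries.coeff (R := ℤ) (e - m) f else 0 := by
  rw [mul_sub, mul_one, map_sub, coeff_mul_monomial]
  simp only [mul_one]

end Series
section Mult

variable {k : ℕ}

theorem sort_isCFL {s : Multiset (List (Fin k))} (hs : ∀ u ∈ s, Lyndon u) :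
    IsCFL (Multiset.sort s (· ≥ ·)).flatten (Multiset.sort s (· ≥ ·)) := by
  refine ⟨?_, ?_, rfl⟩
  · intro u hu
    exact hs u (by rwa [← Multiset.mem_sort (α := List (Fin k)) (· ≥ ·)])
  · exact List.isChain_iff_pairwise.2 (Multiset.pairwise_sort s _)

/-- Rebuild a word from a multiset of (Lyndon) factors. -/
def theta (s : Multiset (List (Fin k))) : List (Fin k) :=
  (Multiset.sort s (· ≥ ·)).flatten

theorem cont_theta (s : Multiset (List (Fin k))) :
    cont (theta s) = (s.map cont).sum := by
  rw [theta, cont_flatten]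
  calc (List.map cont (Multiset.sort s (· ≥ ·))).sum
      = ((Multiset.sort s (· ≥ ·) : Multiset (List (Fin k))).map cont).sum := by
        rw [Multiset.map_coe, Multiset.sum_coe]
    _ = ((s.map cont)).sum := by rw [Multiset.sort_eq]

theorem theta_inj {s t : Multiset (List (Fin k))} (hs : ∀ u ∈ s, Lyndon u)
    (ht : ∀ u ∈ t, Lyndon u) (h : theta s = theta t) : s = t := by
  have h1 := sort_isCFL hs
  have h2 := sort_isCFL ht
  rw [theta, theta] at h
  rw [← h] at h2
  have := cfl_unique (Multiset.sort s (· ≥ ·)).flatten.length _ _ _ rfl h1 h2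
  calc s = ↑(Multiset.sort s (· ≥ ·)) := (Multiset.sort_eq _ _).symm
    _ = ↑(Multiset.sort t (· ≥ ·)) := by rw [this]
    _ = t := Multiset.sort_eq _ _

theorem theta_surj (w : List (Fin k)) :
    ∃ s : Multiset (List (Fin k)), (∀ u ∈ s, Lyndon u) ∧ theta s = w := by
  obtain ⟨L, hL⟩ := cfl_exists w
  refine ⟨(L : Multiset (List (Fin k))), ?_, ?_⟩
  · intro u hu
    exact hL.1 u (by rwa [← Multiset.mem_coe])
  · have hperm : (Multiset.sort (L : Multiset (List (Fin k))) (· ≥ ·)).Perm L := by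
      rw [← Multiset.coe_eq_coe]
      exact Multiset.sort_eq _ _
    have hsorted1 := Multiset.pairwise_sort (L : Multiset (List (Fin k))) (· ≥ ·)
    have hsorted2 : List.Pairwise (· ≥ ·) L := List.isChain_iff_pairwise.1 hL.2.1
    have : Multiset.sort (L : Multiset (List (Fin k))) (· ≥ ·) = L :=
      List.Perm.eq_of_pairwise' hsorted1 hsorted2 hperm
    rw [theta, this]
    exact hL.2.2

/-- Multisets of Lyndon words with total content `e` avoiding the factors in `T`. -/
def MLynd (T : Finset (List (Fin k))) (e : Fin k →₀ ℕ) : Set (Multiset (List (Fin k))) :=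
  {s | (∀ u ∈ s, Lyndon u) ∧ (s.map cont).sum = e ∧ ∀ u ∈ T, u ∉ s}

theorem MLynd_finite (T : Finset (List (Fin k))) (e : Fin k →₀ ℕ) :
    (MLynd T e).Finite := by
  apply Set.Finite.of_finite_image (f := theta)
  · apply Set.Finite.subset (wordFinset e).finite_toSet
    rintro _ ⟨s, hs, rfl⟩
    have : cont (theta s) = e := by rw [cont_theta]; exact hs.2.1
    simpa [Finset.mem_coe, mem_wordFinset] using this
  · intro s hs t ht h
    exact theta_inj hs.1 ht.1 h

/-- `A T e` : the number of multisets of Lyndon words of total content `e`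
avoiding `T`. -/
noncomputable def Acount (T : Finset (List (Fin k))) (e : Fin k →₀ ℕ) : ℕ :=
  (MLynd T e).ncard

theorem Acount_empty (e : Fin k →₀ ℕ) : Acount ∅ e = (wordFinset e).card := by
  have himg : theta '' (MLynd (∅ : Finset (List (Fin k))) e) = ↑(wordFinset e) := by
    ext w
    constructor
    · rintro ⟨s, hs, rfl⟩
      have : cont (theta s) = e := by rw [cont_theta]; exact hs.2.1
      simpa [Finset.mem_coe, mem_wordFinset] using this
    · intro hw
      obtain ⟨s, hs, rfl⟩ := theta_surj w
      refine ⟨s, ⟨hs, ?_, by simp⟩, rfl⟩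
      rw [← cont_theta]
      simpa [Finset.mem_coe, mem_wordFinset] using hw
  have hinj : Set.InjOn theta (MLynd (∅ : Finset (List (Fin k))) e) := by
    intro s hs t ht h
    exact theta_inj hs.1 ht.1 h
  calc Acount ∅ e = (theta '' (MLynd ∅ e)).ncard := (Set.ncard_image_of_injOn hinj).symm
    _ = (↑(wordFinset e) : Set (List (Fin k))).ncard := by rw [himg]
    _ = (wordFinset e).card := Set.ncard_coe_finset _

theorem Acount_rec {v : List (Fin k)} (hv : Lyndon v) (T : Finset (List (Fin k)))
    (hvT : v ∉ T) (e : Fin k →₀ ℕ) :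
    Acount T e = Acount (insert v T) e +
      (if cont v ≤ e then Acount T (e - cont v) else 0) := by
  classical
  set S2 : Set (Multiset (List (Fin k))) := {s | s ∈ MLynd T e ∧ v ∈ s} with hS2
  have hsplit : MLynd T e = MLynd (insert v T) e ∪ S2 := by
    ext s
    constructor
    · intro hs
      by_cases hvs : v ∈ s
      · exact Or.inr ⟨hs, hvs⟩
      · refine Or.inl ⟨hs.1, hs.2.1, ?_⟩
        intro u hu
        rcases Finset.mem_insert.1 hu with rfl | hu'
        · exact hvs
        · exact hs.2.2 u hu'
    · rintro (h | ⟨hs, -⟩)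
      · exact ⟨h.1, h.2.1, fun u hu => h.2.2 u (Finset.mem_insert_of_mem hu)⟩
      · exact hs
  have hdisj : Disjoint (MLynd (insert v T) e) S2 := by
    rw [Set.disjoint_left]
    rintro s hs1 ⟨-, hvs⟩
    exact hs1.2.2 v (Finset.mem_insert_self v T) hvs
  have hfin1 : (MLynd (insert v T) e).Finite := MLynd_finite _ _
  have hfin2 : S2.Finite := (MLynd_finite T e).subset fun s hs => hs.1
  have hcard : Acount T e = Acount (insert v T) e + S2.ncard := by
    rw [Acount, hsplit, Set.ncard_union_eq hdisj hfin1 hfin2]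
    rfl
  rw [hcard]
  congr 1
  by_cases hle : cont v ≤ e
  · rw [if_pos hle]
    have himg : (fun s => Multiset.erase s v) '' S2 = MLynd T (e - cont v) := by
      ext s'
      constructor
      · rintro ⟨s, ⟨⟨hL, hsum, havoid⟩, hvs⟩, rfl⟩
        refine ⟨fun u hu => hL u (Multiset.mem_of_mem_erase hu), ?_,
          fun u hu hmem => havoid u hu (Multiset.mem_of_mem_erase hmem)⟩
        have hcons : v ::ₘ s.erase v = s := Multiset.cons_erase hvs
        have : ((v ::ₘ s.erase v).map cont).sum = e := by rw [hcons]; exact hsum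
        rw [Multiset.map_cons, Multiset.sum_cons] at this
        refine eq_tsub_of_add_eq ?_
        rw [add_comm]
        exact this
      · rintro ⟨hL, hsum, havoid⟩
        refine ⟨v ::ₘ s', ⟨⟨?_, ?_, ?_⟩, Multiset.mem_cons_self v s'⟩, ?_⟩
        · intro u hu
          rcases Multiset.mem_cons.1 hu with rfl | hu'
          · exact hv
          · exact hL u hu'
        · rw [Multiset.map_cons, Multiset.sum_cons, hsum]
          exact add_tsub_cancel_of_le hle
        · intro u hu hmem
          rcases Multiset.mem_cons.1 hmem with rfl | hmem'
          · exact hvT hu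
          · exact havoid u hu hmem'
        · exact Multiset.erase_cons_head v s'
    have hinj : Set.InjOn (fun s => Multiset.erase s v) S2 := by
      rintro s ⟨-, hvs⟩ t ⟨-, hvt⟩ h
      have := congrArg (fun m => v ::ₘ m) h
      simpa [Multiset.cons_erase hvs, Multiset.cons_erase hvt] using this
    calc S2.ncard = ((fun s => Multiset.erase s v) '' S2).ncard :=
          (Set.ncard_image_of_injOn hinj).symm
      _ = Acount T (e - cont v) := by rw [himg]; rfl
  · rw [if_neg hle]
    have : S2 = ∅ := by
      ext s
      simp only [Set.mem_empty_iff_false, iff_false]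
      rintro ⟨⟨-, hsum, -⟩, hvs⟩
      exact hle (hsum ▸ Multiset.le_sum_of_mem (Multiset.mem_map_of_mem cont hvs))
    rw [this]
    simp

theorem coeff_Wser_prod (T : Finset (List (Fin k))) (hT : ∀ u ∈ T, Lyndon u)
    (e : Fin k →₀ ℕ) :
    MvPowerSeries.coeff (R := ℤ) e
        (Wser k * ∏ u ∈ T, (1 - MvPowerSeries.monomial (R := ℤ) (cont u) 1)) =
      (Acount T e : ℤ) := by
  classical
  induction T using Finset.induction_on generalizing e with
  | empty =>
    rw [Finset.prod_empty, mul_one, coeff_Wser, Acount_empty]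
  | @insert v T hvT ih =>
    have hv : Lyndon v := hT v (Finset.mem_insert_self v T)
    have hT' : ∀ u ∈ T, Lyndon u := fun u hu => hT u (Finset.mem_insert_of_mem hu)
    rw [Finset.prod_insert hvT]
    have hre : Wser k * ((1 - MvPowerSeries.monomial (R := ℤ) (cont v) 1) *
        ∏ u ∈ T, (1 - MvPowerSeries.monomial (R := ℤ) (cont u) 1)) =
        (Wser k * ∏ u ∈ T, (1 - MvPowerSeries.monomial (R := ℤ) (cont u) 1)) *
          (1 - MvPowerSeries.monomial (R := ℤ) (cont v) 1) := by ring
    rw [hre, coeff_mul_one_sub_monomial, ih hT', Acount_rec hv T hvT e]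
    push_cast
    split
    · rw [ih hT']
      ring
    · ring

end Mult
section Necklaces

variable {k : ℕ}

theorem rotEquiv_equivalence : Equivalence (@RotEquiv k) := by
  constructor
  · intro l
    exact ⟨0, (List.rotate_zero l).symm⟩
  · rintro l l' ⟨m, rfl⟩
    rcases eq_or_ne l [] with rfl | hne
    · exact ⟨0, by simp [List.rotate_nil]⟩
    · have hn : 0 < l.length := List.length_pos_iff.2 hne
      refine ⟨l.length - m % l.length, ?_⟩
      rw [List.rotate_rotate]
      have : m + (l.length - m % l.length) = l.length * (m / l.length + 1) := by
        have h1 : m % l.length < l.length := Nat.mod_lt _ hn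
        have h2 : l.length * (m / l.length) + m % l.length = m := Nat.div_add_mod m l.length
        ring_nf
        omega
      rw [this, List.rotate_length_mul]
  · rintro l l' l'' ⟨m, rfl⟩ ⟨m', rfl⟩
    exact ⟨m + m', List.rotate_rotate l m m'⟩


theorem quot_mk_eq_iff_rotEquiv {l l' : List (Fin k)} :
    Quot.mk (@RotEquiv k) l = Quot.mk (@RotEquiv k) l' ↔ RotEquiv l l' := by
  rw [Quot.eq]
  exact rotEquiv_equivalence.eqvGen_iff

attribute [local instance] Classical.propDecidable

/-- The finset of Lyndon words with content `m`. -/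
noncomputable def lyndonFinset (m : Fin k →₀ ℕ) : Finset (List (Fin k)) :=
  (wordFinset m).filter fun w => Lyndon w

theorem mem_lyndonFinset {m : Fin k →₀ ℕ} {w : List (Fin k)} :
    w ∈ lyndonFinset m ↔ cont w = m ∧ Lyndon w := by
  rw [lyndonFinset, Finset.mem_filter, mem_wordFinset]

theorem necklaceCount_eq_card_lyndon (m : Fin k →₀ ℕ) :
    aperiodicNecklaceCount k m = (lyndonFinset m).card := by
  classical
  set f : List (Fin k) → Necklace k := Quot.mk (@RotEquiv k) with hf
  set NS : Set (Necklace k) := {nk : Necklace k |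
    0 < Necklace.length nk ∧ Necklace.Aperiodic nk ∧ ∀ i, Necklace.count i nk = m i}
    with hNS
  have himg : f '' ↑(lyndonFinset m) = NS := by
    ext nk
    constructor
    · rintro ⟨w, hw, rfl⟩
      rw [Finset.mem_coe, mem_lyndonFinset] at hw
      obtain ⟨hcw, hlw⟩ := hw
      have hwne : w ≠ [] := hlw.ne_nil
      refine ⟨?_, ?_, ?_⟩
      · exact List.length_pos_iff.2 hwne
      · intro l hl m' hm'0 hm'len hrot
        have hequiv : RotEquiv l w := quot_mk_eq_iff_rotEquiv.1 hl
        obtain ⟨t, hteq⟩ := hequiv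
        have hwrot : w.rotate m' = w := by
          rw [hteq, List.rotate_rotate, Nat.add_comm, ← List.rotate_rotate, hrot]
        have hlenw : m' < w.length := by
          rw [hteq, List.length_rotate]
          exact hm'len
        have := hlw.2 m' hm'0 hlenw
        rw [hwrot] at this
        exact lt_irrefl _ this
      · intro i
        have : Necklace.count i (f w) = w.count i := rfl
        rw [this, ← cont_apply, hcw]
    · intro hnk
      obtain ⟨l, rfl⟩ := Quot.exists_rep nk
      obtain ⟨hpos, haper, hcount⟩ := hnk
      have hn : 0 < l.length := hpos
      set n := l.length with hnn
      have hRne : ((Finset.range n).image (fun j => l.rotate j)).Nonempty := by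
        refine ⟨l, Finset.mem_image.2 ⟨0, Finset.mem_range.2 hn, List.rotate_zero l⟩⟩
      set R := (Finset.range n).image (fun j => l.rotate j) with hR
      set l₀ := R.min' hRne with hl₀
      obtain ⟨j, hj, hjrot⟩ := Finset.mem_image.1 (R.min'_mem hRne)
      rw [← hl₀] at hjrot
      have hlen₀ : l₀.length = n := by rw [← hjrot, List.length_rotate]
      have hmk : Quot.mk (@RotEquiv k) l₀ = Quot.mk (@RotEquiv k) l := by
        refine quot_mk_eq_iff_rotEquiv.2 ?_
        exact rotEquiv_equivalence.symm ⟨j, hjrot.symm⟩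
      have hlyn : Lyndon l₀ := by
        refine ⟨?_, ?_⟩
        · intro h
          rw [h] at hlen₀
          simp at hlen₀
          omega
        · intro m' hm'0 hm'len
          have hmem : l₀.rotate m' ∈ R := by
            rw [← hjrot, List.rotate_rotate]
            refine Finset.mem_image.2 ⟨(j + m') % n, Finset.mem_range.2 (Nat.mod_lt _ hn), ?_⟩
            rw [hnn, List.rotate_mod]
          have hle : l₀ ≤ l₀.rotate m' := R.min'_le _ hmem
          refine lt_of_le_of_ne hle ?_
          intro heq
          exact haper l₀ hmk m' hm'0 hm'len heq.symm
      refine ⟨l₀, ?_, hmk⟩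
      rw [Finset.mem_coe, mem_lyndonFinset]
      refine ⟨?_, hlyn⟩
      ext i
      rw [← hjrot, cont_rotate, cont_apply]
      exact hcount i
  have hinj : Set.InjOn f ↑(lyndonFinset m) := by
    intro u hu v hv huv
    rw [Finset.mem_coe, mem_lyndonFinset] at hu hv
    have hlu : Lyndon u := hu.2
    have hlv : Lyndon v := hv.2
    obtain ⟨t, hteq⟩ := quot_mk_eq_iff_rotEquiv.1 huv
    have hune : u ≠ [] := hlu.ne_nil
    have hn : 0 < u.length := List.length_pos_iff.2 hune
    have hvrot : v = u.rotate (t % u.length) := by rw [List.rotate_mod]; exact hteq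
    rcases Nat.eq_zero_or_pos (t % u.length) with h0 | hpos
    · rw [h0, List.rotate_zero] at hvrot
      exact hvrot.symm
    · exfalso
      set t' := t % u.length with ht'
      have ht'lt : t' < u.length := Nat.mod_lt _ hn
      have h1 : u < v := by
        rw [hvrot]
        exact hlu.2 t' hpos ht'lt
      have hvlen : v.length = u.length := by rw [hvrot, List.length_rotate]
      have h2 : v < u := by
        have hurot : v.rotate (u.length - t') = u := by
          rw [hvrot, List.rotate_rotate]
          have : t' + (u.length - t') = u.length := by omega
          rw [this, List.rotate_length]
        have := hlv.2 (u.length - t') (by omega) (by omega)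
        rwa [hurot] at this
      exact absurd h1 (lt_asymm h2)
  calc aperiodicNecklaceCount k m = NS.ncard := rfl
    _ = (f '' ↑(lyndonFinset m)).ncard := by rw [himg]
    _ = (↑(lyndonFinset m) : Set (List (Fin k))).ncard := Set.ncard_image_of_injOn hinj
    _ = (lyndonFinset m).card := Set.ncard_coe_finset _

end Necklaces

section Final

variable {k : ℕ}

theorem MLynd_zero (T : Finset (List (Fin k))) :
    MLynd T (0 : Fin k →₀ ℕ) = {(0 : Multiset (List (Fin k)))} := by
  ext s
  simp only [Set.mem_singleton_iff]
  constructor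
  · rintro ⟨hL, hsum, -⟩
    by_contra hne
    obtain ⟨u, hu⟩ := Multiset.exists_mem_of_ne_zero hne
    have h1 : cont u ≤ (s.map cont).sum := Multiset.le_sum_of_mem (Multiset.mem_map_of_mem cont hu)
    rw [hsum] at h1
    have h2 : cont u = 0 := le_antisymm h1 zero_le
    exact (hL u hu).ne_nil (cont_eq_zero_iff.1 h2)
  · rintro rfl
    refine ⟨by simp, by simp, by simp⟩

theorem Acount_zero (T : Finset (List (Fin k))) : Acount T (0 : Fin k →₀ ℕ) = 1 := by
  rw [Acount, MLynd_zero, Set.ncard_singleton]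

end Final
/-- **Witt identity**: as formal power series in `z₁,…,z_k`,
`∏_{m ≠ 0} (1 − z^m)^{M(m)} = 1 − z₁ − ⋯ − z_k`.  The infinite product is understood
via its finite truncations: each factor is `1` plus terms of total degree `≥ 1`, and
only finitely many factors contribute to any fixed total degree, so the identity
states that for every exponent `e` and every finite set `F` of nonzero exponent
tuples containing all tuples of total degree at most that of `e`, the coefficient of
`e` in `∏_{m ∈ F} (1 − z^m)^{M(m)}` equals the coefficient of `e` in
`1 − z₁ − ⋯ − z_k`. -/
theorem witt_identity (k : ℕ) (hk : 1 ≤ k) (e : Fin k →₀ ℕ)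
    (F : Finset (Fin k →₀ ℕ)) (hF0 : (0 : Fin k →₀ ℕ) ∉ F)
    (hF : ∀ m : Fin k →₀ ℕ, m ≠ 0 →
      (m.sum fun _ v => v) ≤ (e.sum fun _ v => v) → m ∈ F) :
    MvPowerSeries.coeff (R := ℤ) e
        (∏ m ∈ F, (1 - MvPowerSeries.monomial (R := ℤ) m 1) ^ aperiodicNecklaceCount k m) =
      MvPowerSeries.coeff (R := ℤ) e (1 - ∑ i : Fin k, MvPowerSeries.X i) := by
  classical
  set LF : Finset (List (Fin k)) := F.biUnion lyndonFinset with hLF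
  have hmemLF : ∀ w : List (Fin k), w ∈ LF ↔ Lyndon w ∧ cont w ∈ F := by
    intro w
    rw [hLF]
    simp only [Finset.mem_biUnion]
    constructor
    · rintro ⟨m, hm, hw⟩
      obtain ⟨rfl, hlyn⟩ := mem_lyndonFinset.1 hw
      exact ⟨hlyn, hm⟩
    · rintro ⟨hlyn, hc⟩
      exact ⟨cont w, hc, mem_lyndonFinset.2 ⟨rfl, hlyn⟩⟩
  have hLFlyndon : ∀ u ∈ LF, Lyndon u := fun u hu => ((hmemLF u).1 hu).1
  have hstep1 : (∏ m ∈ F, (1 - MvPowerSeries.monomial (R := ℤ) m 1) ^ aperiodicNecklaceCount k m) =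
      ∏ u ∈ LF, (1 - MvPowerSeries.monomial (R := ℤ) (cont u) 1) := by
    rw [hLF, Finset.prod_biUnion]
    · refine Finset.prod_congr rfl ?_
      intro m hm
      rw [necklaceCount_eq_card_lyndon, ← Finset.prod_const]
      refine Finset.prod_congr rfl ?_
      intro u hu
      rw [(mem_lyndonFinset.1 hu).1]
    · intro m1 h1 m2 h2 hne
      refine Finset.disjoint_left.2 ?_
      intro w hw1 hw2
      exact hne (((mem_lyndonFinset.1 hw1).1.symm).trans (mem_lyndonFinset.1 hw2).1)
  set P := ∏ u ∈ LF, (1 - MvPowerSeries.monomial (R := ℤ) (cont u) 1) with hPdef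
  have hP : P = (Wser k * P) * (1 - ∑ i : Fin k, MvPowerSeries.X i) := by
    have h1 : (Wser k * P) * (1 - ∑ i : Fin k, MvPowerSeries.X i) =
        P * (Wser k * (1 - ∑ i : Fin k, MvPowerSeries.X i)) := by ring
    rw [h1, Wser_mul_one_sub, mul_one]
  have hcoeffA : ∀ a : Fin k →₀ ℕ, a ≤ e →
      MvPowerSeries.coeff (R := ℤ) a (Wser k * P) = MvPowerSeries.coeff (R := ℤ) a 1 := by
    intro a ha
    rw [hPdef, coeff_Wser_prod LF hLFlyndon a, MvPowerSeries.coeff_one]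
    rcases eq_or_ne a 0 with rfl | hne
    · rw [if_pos rfl, Acount_zero]
      norm_num
    · rw [if_neg hne]
      have hempty : MLynd LF a = ∅ := by
        ext s
        simp only [Set.mem_empty_iff_false, iff_false]
        rintro ⟨hL, hsum, havoid⟩
        have hsne : s ≠ 0 := by
          rintro rfl
          simp at hsum
          exact hne hsum.symm
        obtain ⟨u, hu⟩ := Multiset.exists_mem_of_ne_zero hsne
        have hcle : cont u ≤ a :=
          hsum ▸ Multiset.le_sum_of_mem (Multiset.mem_map_of_mem cont hu)
        have hcne : cont u ≠ 0 := fun h0 => (hL u hu).ne_nil (cont_eq_zero_iff.1 h0)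
        have hdeg : deg (cont u) ≤ deg e := le_trans (deg_mono hcle) (deg_mono ha)
        have hFmem : cont u ∈ F := hF (cont u) hcne hdeg
        exact havoid u ((hmemLF u).2 ⟨hL u hu, hFmem⟩) hu
      rw [Acount, hempty]
      simp
  rw [hstep1]
  calc MvPowerSeries.coeff (R := ℤ) e P
      = MvPowerSeries.coeff (R := ℤ) e
          ((Wser k * P) * (1 - ∑ i : Fin k, MvPowerSeries.X i)) := by rw [← hP]
    _ = MvPowerSeries.coeff (R := ℤ) e (1 * (1 - ∑ i : Fin k, MvPowerSeries.X i)) :=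
        coeff_mul_congr hcoeffA
    _ = MvPowerSeries.coeff (R := ℤ) e (1 - ∑ i : Fin k, MvPowerSeries.X i) := by rw [one_mul]
end
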